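/- arXiv:0806.0434 — 5 statements merged into one kernel-verified Lean document; each statement's English description precedes it below -/
import Mathlib

section
/- Let n ≥ 3 and let S = {i_1, i_2, ..., i_k} ⊆ [n] with i_1 < i_2 < ... < i_k. Then there exists a permutation σ of [n] with circular peak set CP(σ) = S if and only if i_j ≥ 2j + 1 for every j ∈ {1, ..., k}. -/
open Finset Polynomial

/-- `σ` is a permutation of `[n] = {1, …, n}` (viewed as a function `ℕ → ℕ`
restricted to a bijection of `{1, …, n}` onto itself). -/
def IsPermOn (n : ℕ) (σ : ℕ → ℕ) : Prop :=
  Set.BijOn σ (Set.Icc 1 n) (Set.Icc 1 n)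

/-- The circular peak set of `σ` (as a permutation of `[n]`):
`CP(σ) = {σ(i) : 2 ≤ i ≤ n−1, σ(i−1) < σ(i) > σ(i+1)}`. -/
def CP (n : ℕ) (σ : ℕ → ℕ) : Finset ℕ :=
  ((Finset.Icc 2 (n - 1)).filter (fun i => σ (i - 1) < σ i ∧ σ (i + 1) < σ i)).image σ

open scoped Classical in
/-- `Pn n` is the collection of all subsets `S ⊆ [n]` arising as the circular peak
set of some permutation of `[n]`. -/
noncomputable def Pn (n : ℕ) : Finset (Finset ℕ) :=
  (Finset.Icc 1 n).powerset.filter (fun S => ∃ σ : ℕ → ℕ, IsPermOn n σ ∧ CP n σ = S)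

/-- `pcount n k` is the number of members of `Pn n` of cardinality `k`;
in the paper's notation, `p_{n,i} = pcount n (i+1)`. -/
noncomputable def pcount (n k : ℕ) : ℕ :=
  ((Pn n).filter (fun S => S.card = k)).card

/-- The f-polynomial `P_n(x) = Σ_{i=0}^{⌊(n−1)/2⌋} p_{n,i−1} x^{⌊(n−1)/2⌋−i}`. -/
noncomputable def fpoly (n : ℕ) : Polynomial ℚ :=
  ∑ i ∈ Finset.range ((n - 1) / 2 + 1),
    Polynomial.C (pcount n i : ℚ) * Polynomial.X ^ ((n - 1) / 2 - i)

lemma sort_strictMono (A : Finset ℕ) {s t : ℕ} (hst : s < t)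
    (ht : t < (A.sort (· ≤ ·)).length) :
    (A.sort (· ≤ ·))[s]'(by omega) < (A.sort (· ≤ ·))[t]'ht := by
  have hs := A.sortedLT_sort.strictMono_get
    (show (⟨s, by omega⟩ : Fin (A.sort (· ≤ ·)).length) < ⟨t, ht⟩ from Fin.mk_lt_mk.2 hst)
  simpa [List.get_eq_getElem] using hs

lemma sort_mono (A : Finset ℕ) {s t : ℕ} (hst : s ≤ t)
    (ht : t < (A.sort (· ≤ ·)).length) :
    (A.sort (· ≤ ·))[s]'(by omega) ≤ (A.sort (· ≤ ·))[t]'ht := by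
  rcases Nat.lt_or_ge s t with h | h
  · exact le_of_lt (sort_strictMono A h ht)
  · have : s = t := by omega
    subst this; exact le_rfl

lemma sort_getElem_mem (A : Finset ℕ) {t : ℕ} (ht : t < (A.sort (· ≤ ·)).length) :
    (A.sort (· ≤ ·))[t]'ht ∈ A :=
  (Finset.mem_sort (α := ℕ) (· ≤ ·)).1 (List.getElem_mem ht)

lemma filter_lt_sort_card (A : Finset ℕ) {j : ℕ} (hj : j < (A.sort (· ≤ ·)).length) :
    (A.filter (fun y => y < (A.sort (· ≤ ·))[j]'hj)).card = j := by
  set L := A.sort (· ≤ ·) with hL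
  have hset : A.filter (fun y => y < L[j]'hj) = (L.take j).toFinset := by
    ext y
    simp only [Finset.mem_filter, List.mem_toFinset]
    constructor
    · rintro ⟨hyA, hylt⟩
      have hyL : y ∈ L := (Finset.mem_sort (α := ℕ) (· ≤ ·)).2 hyA
      obtain ⟨t, htL, rfl⟩ := List.mem_iff_getElem.1 hyL
      have htj : t < j := by
        by_contra h
        exact absurd hylt (not_lt.2 (sort_mono A (by omega) htL))
      have hlt : t < (L.take j).length := by rw [List.length_take]; omega
      exact List.mem_iff_getElem.2 ⟨t, hlt, by rw [List.getElem_take]⟩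
    · intro htake
      obtain ⟨t, ht1, rfl⟩ := List.mem_iff_getElem.1 htake
      have ht2 : t < j := by rw [List.length_take] at ht1; omega
      have ht3 : t < L.length := by rw [List.length_take] at ht1; omega
      rw [List.getElem_take]
      exact ⟨sort_getElem_mem A ht3, sort_strictMono A ht2 hj⟩
  rw [hset, List.toFinset_card_of_nodup ((List.take_sublist j L).nodup (A.sort_nodup _)),
    List.length_take]
  omega

lemma filter_le_sort_card (A : Finset ℕ) {j : ℕ} (hj : j < (A.sort (· ≤ ·)).length) :
    (A.filter (fun y => y ≤ (A.sort (· ≤ ·))[j]'hj)).card = j + 1 := by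
  set L := A.sort (· ≤ ·) with hL
  have hset : A.filter (fun y => y ≤ L[j]'hj) = (L.take (j+1)).toFinset := by
    ext y
    simp only [Finset.mem_filter, List.mem_toFinset]
    constructor
    · rintro ⟨hyA, hylt⟩
      have hyL : y ∈ L := (Finset.mem_sort (α := ℕ) (· ≤ ·)).2 hyA
      obtain ⟨t, htL, rfl⟩ := List.mem_iff_getElem.1 hyL
      have htj : t < j + 1 := by
        by_contra h
        exact absurd hylt (not_le.2 (sort_strictMono A (by omega) htL))
      have hlt : t < (L.take (j+1)).length := by rw [List.length_take]; omega
      exact List.mem_iff_getElem.2 ⟨t, hlt, by rw [List.getElem_take]⟩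
    · intro htake
      obtain ⟨t, ht1, rfl⟩ := List.mem_iff_getElem.1 htake
      have ht2 : t < j + 1 := by rw [List.length_take] at ht1; omega
      have ht3 : t < L.length := by rw [List.length_take] at ht1; omega
      rw [List.getElem_take]
      exact ⟨sort_getElem_mem A ht3, sort_mono A (by omega) hj⟩
  rw [hset, List.toFinset_card_of_nodup ((List.take_sublist (j+1) L).nodup (A.sort_nodup _)),
    List.length_take]
  omega

lemma sort_getElem_lt_of_card (A : Finset ℕ) {x t : ℕ}
    (ht : t < (A.filter (fun y => y < x)).card) :
    ∃ h : t < (A.sort (· ≤ ·)).length, (A.sort (· ≤ ·))[t]'h < x := by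
  have h1 : t < (A.sort (· ≤ ·)).length := by
    rw [Finset.length_sort]
    exact lt_of_lt_of_le ht (Finset.card_filter_le _ _)
  refine ⟨h1, ?_⟩
  by_contra h
  push_neg at h
  have hsub : A.filter (fun y => y < x) ⊆ A.filter (fun y => y < (A.sort (· ≤ ·))[t]'h1) :=
    Finset.monotone_filter_right A (fun y _ hy => lt_of_lt_of_le hy h)
  have := Finset.card_le_card hsub
  rw [filter_lt_sort_card A h1] at this
  omega

def buildPerm (k : ℕ) (L B : List ℕ) (p : ℕ) : ℕ :=
  if p ≤ 2*k ∧ p % 2 = 0 then L.getD (p/2 - 1) 0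
  else if p ≤ 2*k then B.getD ((p-1)/2) 0
  else B.getD (p - k - 1) 0

lemma buildPerm_even (k : ℕ) (L B : List ℕ) {j : ℕ} (hj : j < k) :
    buildPerm k L B (2*j+2) = L.getD j 0 := by
  unfold buildPerm
  rw [if_pos ⟨by omega, by omega⟩]
  congr 1
  omega

lemma buildPerm_odd (k : ℕ) (L B : List ℕ) {t : ℕ} (ht : t ≤ k) :
    buildPerm k L B (2*t+1) = B.getD t 0 := by
  unfold buildPerm
  by_cases h : 2*t+1 ≤ 2*k
  · rw [if_neg (by omega), if_pos h]
    congr 1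
    omega
  · rw [if_neg (by omega), if_neg h]
    congr 1
    omega

lemma buildPerm_tail (k : ℕ) (L B : List ℕ) {p : ℕ} (hp : 2*k < p) :
    buildPerm k L B p = B.getD (p - k - 1) 0 := by
  unfold buildPerm
  rw [if_neg (by omega), if_neg (by omega)]

theorem bwd (n : ℕ) (hn : 3 ≤ n) (S : Finset ℕ) (hS : S ⊆ Finset.Icc 1 n)
    (hcond : ∀ (j : ℕ) (hj : j < (S.sort (· ≤ ·)).length),
        2 * (j + 1) + 1 ≤ (S.sort (· ≤ ·)).get ⟨j, hj⟩) :
    ∃ σ : ℕ → ℕ, IsPermOn n σ ∧ CP n σ = S := by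
  simp only [List.get_eq_getElem] at hcond
  obtain ⟨k, hkdef⟩ : ∃ k, k = S.card := ⟨_, rfl⟩
  obtain ⟨T, hTdef⟩ : ∃ T, T = Finset.Icc 1 n \ S := ⟨_, rfl⟩
  have hsortlenL : (S.sort (· ≤ ·)).length = k := by rw [Finset.length_sort, hkdef]
  have hsortlenB : (T.sort (· ≤ ·)).length = n - k := by
    rw [Finset.length_sort, hTdef, Finset.card_sdiff_of_subset hS, Nat.card_Icc, hkdef]
    omega
  have hTIcc : ∀ y ∈ T, 1 ≤ y ∧ y ≤ n ∧ y ∉ S := by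
    intro y hy
    rw [hTdef, Finset.mem_sdiff, Finset.mem_Icc] at hy
    tauto
  have hSIcc : ∀ y ∈ S, 1 ≤ y ∧ y ≤ n := fun y hy => Finset.mem_Icc.1 (hS hy)
  obtain ⟨L, hLdef⟩ : ∃ L : List ℕ, L = S.sort (· ≤ ·) := ⟨_, rfl⟩
  obtain ⟨B, hBdef⟩ : ∃ B : List ℕ, B = T.sort (· ≤ ·) := ⟨_, rfl⟩
  have hLlen : L.length = k := by rw [hLdef, hsortlenL]
  have hBlen : B.length = n - k := by rw [hBdef, hsortlenB]
  have hcond' : ∀ j, j < k → 2 * (j + 1) + 1 ≤ L.getD j 0 := by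
    intro j hjk
    have hj : j < (S.sort (· ≤ ·)).length := by omega
    have h := hcond j hj
    rw [hLdef, List.getD_eq_getElem _ _ (by omega)]
    exact h
  have hmemL : ∀ j, j < k → L.getD j 0 ∈ S := by
    intro j hj
    rw [hLdef, List.getD_eq_getElem _ _ (by omega)]
    exact sort_getElem_mem S (by omega)
  have hmemB : ∀ t, t < n - k → B.getD t 0 ∈ T := by
    intro t ht
    rw [hBdef, List.getD_eq_getElem _ _ (by omega)]
    exact sort_getElem_mem T (by omega)
  have hLmono : ∀ s t, s < t → t < k → L.getD s 0 < L.getD t 0 := by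
    intro s t hst ht
    rw [hLdef, List.getD_eq_getElem _ _ (by omega), List.getD_eq_getElem _ _ (by omega)]
    exact sort_strictMono S hst (by omega)
  have hBmono : ∀ s t, s < t → t < n - k → B.getD s 0 < B.getD t 0 := by
    intro s t hst ht
    rw [hBdef, List.getD_eq_getElem _ _ (by omega), List.getD_eq_getElem _ _ (by omega)]
    exact sort_strictMono T hst (by omega)
  have hLsurj : ∀ s ∈ S, ∃ j, j < k ∧ L.getD j 0 = s := by
    intro s hs
    have : s ∈ L := by
      rw [hLdef]; exact (Finset.mem_sort (α := ℕ) (· ≤ ·)).2 hs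
    obtain ⟨j, hjl, hje⟩ := List.mem_iff_getElem.1 this
    exact ⟨j, by omega, by rw [List.getD_eq_getElem _ _ hjl]; exact hje⟩
  have hBsurj : ∀ v ∈ T, ∃ t, t < n - k ∧ B.getD t 0 = v := by
    intro v hv
    have : v ∈ B := by
      rw [hBdef]; exact (Finset.mem_sort (α := ℕ) (· ≤ ·)).2 hv
    obtain ⟨t, htl, hte⟩ := List.mem_iff_getElem.1 this
    exact ⟨t, by omega, by rw [List.getD_eq_getElem _ _ htl]; exact hte⟩
  have hkn : 2 * k < n := by
    rcases Nat.eq_zero_or_pos k with h0 | hk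
    · omega
    · have h1 := hcond' (k-1) (by omega)
      have h2 := (hSIcc _ (hmemL (k-1) (by omega))).2
      omega
  -- the key inequality
  have hBL : ∀ j, j < k → ∀ t, t ≤ j + 1 → B.getD t 0 < L.getD j 0 := by
    intro j hj t ht
    have hj' : j < (S.sort (· ≤ ·)).length := by omega
    have hgetd : L.getD j 0 = (S.sort (· ≤ ·))[j]'hj' := by
      rw [hLdef, List.getD_eq_getElem _ _ (by omega)]
    set x := (S.sort (· ≤ ·))[j]'hj' with hxdef
    have hx : 2 * (j+1) + 1 ≤ x := by rw [← hgetd]; exact hcond' j hj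
    have hxS : x ∈ S := sort_getElem_mem S hj'
    have hxn : 1 ≤ x ∧ x ≤ n := Finset.mem_Icc.1 (hS hxS)
    have hSfil : (S.filter (fun y => y < x)).card = j := filter_lt_sort_card S hj'
    have hIccfil : (Finset.Icc 1 n).filter (fun y => y < x) = Finset.Icc 1 (x-1) := by
      ext y
      simp only [Finset.mem_filter, Finset.mem_Icc]
      omega
    have hsplit : T.filter (fun y => y < x) =
        ((Finset.Icc 1 n).filter (fun y => y < x)) \ (S.filter (fun y => y < x)) := by
      rw [hTdef]
      ext y
      simp only [Finset.mem_filter, Finset.mem_sdiff]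
      tauto
    have hsubfil : S.filter (fun y => y < x) ⊆ (Finset.Icc 1 n).filter (fun y => y < x) :=
      Finset.monotone_filter_left _ hS
    have hTfil : j + 2 ≤ (T.filter (fun y => y < x)).card := by
      rw [hsplit, Finset.card_sdiff_of_subset hsubfil, hSfil, hIccfil, Nat.card_Icc]
      omega
    obtain ⟨hlt, hres⟩ := sort_getElem_lt_of_card T
      (show j + 1 < (T.filter (fun y => y < x)).card by omega)
    have hBj1 : B.getD (j+1) 0 = (T.sort (· ≤ ·))[j+1]'hlt := by
      rw [hBdef, List.getD_eq_getElem _ _ (by omega)]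
    have hmono : B.getD t 0 ≤ B.getD (j+1) 0 := by
      rcases Nat.lt_or_ge t (j+1) with h | h
      · exact le_of_lt (hBmono t (j+1) h (by omega))
      · have : t = j + 1 := by omega
        rw [this]
    rw [hgetd]
    calc B.getD t 0 ≤ B.getD (j+1) 0 := hmono
      _ < x := by rw [hBj1]; exact hres
  clear hcond hsortlenL hsortlenB
  set σ := buildPerm k L B with hσdef
  have hcases : ∀ p, 1 ≤ p → p ≤ n →
      (∃ j, j < k ∧ p = 2*j+2 ∧ σ p = L.getD j 0) ∨
      (∃ t, t < n - k ∧ ((p = 2*t+1 ∧ p ≤ 2*k) ∨ (p = t+k+1 ∧ 2*k < p)) ∧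
        σ p = B.getD t 0) := by
    intro p h1 h2
    by_cases hle : p ≤ 2*k
    · rcases Nat.even_or_odd p with hev | hod
      · left
        have hev2 : p % 2 = 0 := Nat.even_iff.1 hev
        refine ⟨p/2 - 1, by omega, by omega, ?_⟩
        rw [hσdef]
        unfold buildPerm
        rw [if_pos ⟨hle, hev2⟩]
      · right
        have hod2 : p % 2 = 1 := Nat.odd_iff.1 hod
        refine ⟨(p-1)/2, by omega, Or.inl ⟨by omega, hle⟩, ?_⟩
        rw [hσdef]
        unfold buildPerm
        rw [if_neg (by omega), if_pos hle]
    · right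
      refine ⟨p - k - 1, by omega, Or.inr ⟨by omega, by omega⟩, ?_⟩
      rw [hσdef]
      exact buildPerm_tail k L B (by omega)
  have hLinj : ∀ j j', j < k → j' < k → L.getD j 0 = L.getD j' 0 → j = j' := by
    intro j j' hj hj' he
    rcases Nat.lt_trichotomy j j' with h | h | h
    · have := hLmono j j' h hj'
      omega
    · exact h
    · have := hLmono j' j h hj
      omega
  have hBinj : ∀ t t', t < n - k → t' < n - k → B.getD t 0 = B.getD t' 0 → t = t' := by
    intro t t' ht ht' he
    rcases Nat.lt_trichotomy t t' with h | h | h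
    · have := hBmono t t' h ht'
      omega
    · exact h
    · have := hBmono t' t h ht
      omega
  refine ⟨σ, ⟨?_, ?_, ?_⟩, ?_⟩
  · -- MapsTo
    intro p hp
    rw [Set.mem_Icc] at hp
    rcases hcases p hp.1 hp.2 with ⟨j, hj, _, hv⟩ | ⟨t, ht, _, hv⟩
    · rw [hv]
      exact Set.mem_Icc.2 (hSIcc _ (hmemL j hj))
    · rw [hv]
      have := hTIcc _ (hmemB t ht)
      exact Set.mem_Icc.2 ⟨this.1, this.2.1⟩
  · -- InjOn
    intro p hp q hq heq
    rw [Set.mem_Icc] at hp hq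
    rcases hcases p hp.1 hp.2 with ⟨j, hj, hpe, hv⟩ | ⟨t, ht, hpe, hv⟩ <;>
      rcases hcases q hq.1 hq.2 with ⟨j', hj', hqe, hv'⟩ | ⟨t', ht', hqe, hv'⟩
    · rw [hv, hv'] at heq
      have := hLinj j j' hj hj' heq
      omega
    · rw [hv, hv'] at heq
      have h1 := hmemL j hj
      have h2 := hTIcc _ (hmemB t' ht')
      rw [heq] at h1
      exact absurd h1 h2.2.2
    · rw [hv, hv'] at heq
      have h1 := hmemL j' hj'
      have h2 := hTIcc _ (hmemB t ht)
      rw [← heq] at h1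
      exact absurd h1 h2.2.2
    · rw [hv, hv'] at heq
      have := hBinj t t' ht ht' heq
      omega
  · -- SurjOn
    intro v hv
    rw [Set.mem_Icc] at hv
    by_cases hvS : v ∈ S
    · obtain ⟨j, hjk, hje⟩ := hLsurj v hvS
      refine ⟨2*j+2, Set.mem_Icc.2 ⟨by omega, by omega⟩, ?_⟩
      rw [hσdef, buildPerm_even k L B hjk]
      exact hje
    · have hvT : v ∈ T := by
        rw [hTdef, Finset.mem_sdiff, Finset.mem_Icc]
        exact ⟨hv, hvS⟩
      obtain ⟨t, htk, hte⟩ := hBsurj v hvT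
      rcases Nat.lt_or_ge t k with h | h
      · refine ⟨2*t+1, Set.mem_Icc.2 ⟨by omega, by omega⟩, ?_⟩
        rw [hσdef, buildPerm_odd k L B (le_of_lt h)]
        exact hte
      · refine ⟨t+k+1, Set.mem_Icc.2 ⟨by omega, by omega⟩, ?_⟩
        rw [hσdef, buildPerm_tail k L B (by omega)]
        rw [show t+k+1-k-1 = t by omega]
        exact hte
  · -- CP = S
    have hpeak : ∀ p, 2 ≤ p → p ≤ n - 1 →
        ((σ (p-1) < σ p ∧ σ (p+1) < σ p) ↔ (p % 2 = 0 ∧ p ≤ 2*k)) := by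
      intro p h2 hn1
      by_cases hle : p ≤ 2*k
      · rcases Nat.even_or_odd p with hev | hod
        · have hev2 : p % 2 = 0 := Nat.even_iff.1 hev
          have hjk : p/2 - 1 < k := by omega
          have e1 : p - 1 = 2*(p/2-1)+1 := by omega
          have e2 : p = 2*(p/2-1)+2 := by omega
          have e3 : p + 1 = 2*((p/2-1)+1)+1 := by omega
          have v1 : σ (p-1) = B.getD (p/2-1) 0 := by
            rw [e1, hσdef]; exact buildPerm_odd k L B (by omega)
          have v2 : σ p = L.getD (p/2-1) 0 := by
            conv_lhs => rw [e2]
            rw [hσdef]; exact buildPerm_even k L B hjk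
          have v3 : σ (p+1) = B.getD ((p/2-1)+1) 0 := by
            rw [e3, hσdef]; exact buildPerm_odd k L B (by omega)
          rw [v1, v2, v3]
          have i1 := hBL (p/2-1) hjk (p/2-1) (by omega)
          have i2 := hBL (p/2-1) hjk ((p/2-1)+1) le_rfl
          constructor
          · intro _
            exact ⟨hev2, hle⟩
          · intro _
            exact ⟨i1, i2⟩
        · have hod2 : p % 2 = 1 := Nat.odd_iff.1 hod
          have htk : (p-1)/2 < k := by omega
          have e2 : p = 2*((p-1)/2)+1 := by omega
          have e3 : p + 1 = 2*((p-1)/2)+2 := by omega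
          have v2 : σ p = B.getD ((p-1)/2) 0 := by
            conv_lhs => rw [e2]
            rw [hσdef]; exact buildPerm_odd k L B (by omega)
          have v3 : σ (p+1) = L.getD ((p-1)/2) 0 := by
            rw [e3, hσdef]; exact buildPerm_even k L B htk
          have i1 := hBL ((p-1)/2) htk ((p-1)/2) (by omega)
          constructor
          · rintro ⟨_, hc⟩
            rw [v2, v3] at hc
            omega
          · rintro ⟨hc, _⟩
            omega
      · have v2 : σ p = B.getD (p-k-1) 0 := by
          rw [hσdef]; exact buildPerm_tail k L B (by omega)
        have v3 : σ (p+1) = B.getD (p-k) 0 := by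
          rw [hσdef, buildPerm_tail k L B (by omega)]
          congr 1
          omega
        have hmono := hBmono (p-k-1) (p-k) (by omega) (by omega)
        constructor
        · rintro ⟨_, hc⟩
          rw [v2, v3] at hc
          omega
        · rintro ⟨_, hc⟩
          omega
    show ((Finset.Icc 2 (n - 1)).filter (fun i => σ (i - 1) < σ i ∧ σ (i + 1) < σ i)).image σ = S
    ext s
    constructor
    · intro hs
      obtain ⟨p, hp, rfl⟩ := Finset.mem_image.1 hs
      rw [Finset.mem_filter, Finset.mem_Icc] at hp
      obtain ⟨⟨hp2, hpn⟩, hpk⟩ := hp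
      obtain ⟨hev, hle⟩ := (hpeak p hp2 hpn).1 hpk
      have hjk : p/2 - 1 < k := by omega
      have e2 : p = 2*(p/2-1)+2 := by omega
      have v2 : σ p = L.getD (p/2-1) 0 := by
        conv_lhs => rw [e2]
        rw [hσdef]; exact buildPerm_even k L B hjk
      rw [v2]
      exact hmemL _ hjk
    · intro hs
      obtain ⟨j, hjk, hje⟩ := hLsurj s hs
      have hcnd := hcond' j hjk
      have hsn : s ≤ n := (hSIcc s hs).2
      refine Finset.mem_image.2 ⟨2*j+2, ?_, ?_⟩
      · rw [Finset.mem_filter, Finset.mem_Icc]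
        exact ⟨⟨by omega, by omega⟩, (hpeak (2*j+2) (by omega) (by omega)).2 ⟨by omega, by omega⟩⟩
      · rw [hσdef, buildPerm_even k L B hjk]
        exact hje

theorem fwd (n : ℕ) (hn : 3 ≤ n) (S : Finset ℕ) (hS : S ⊆ Finset.Icc 1 n)
    (σ : ℕ → ℕ) (hperm : IsPermOn n σ) (hCP : CP n σ = S) :
    ∀ (j : ℕ) (hj : j < (S.sort (· ≤ ·)).length),
      2 * (j + 1) + 1 ≤ (S.sort (· ≤ ·)).get ⟨j, hj⟩ := by
  intro j hj
  rw [List.get_eq_getElem]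
  set x := (S.sort (· ≤ ·))[j]'hj with hxdef
  have hxS : x ∈ S := (Finset.mem_sort (α := ℕ) (· ≤ ·)).1 (List.getElem_mem hj)
  have hxn : 1 ≤ x ∧ x ≤ n := Finset.mem_Icc.1 (hS hxS)
  have hCP' : ((Finset.Icc 2 (n - 1)).filter
      (fun i => σ (i - 1) < σ i ∧ σ (i + 1) < σ i)).image σ = S := hCP
  set Pk := (Finset.Icc 2 (n - 1)).filter
      (fun i => σ (i - 1) < σ i ∧ σ (i + 1) < σ i) with hPkdef
  have hPk : ∀ p ∈ Pk, 2 ≤ p ∧ p ≤ n - 1 ∧ σ (p-1) < σ p ∧ σ (p+1) < σ p := by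
    intro p hp
    rw [hPkdef, Finset.mem_filter, Finset.mem_Icc] at hp
    tauto
  have hnonadj : ∀ p ∈ Pk, p + 1 ∉ Pk := by
    intro p hp h'
    obtain ⟨_, _, _, h4⟩ := hPk p hp
    obtain ⟨_, _, h3', _⟩ := hPk (p+1) h'
    simp only [Nat.add_sub_cancel] at h3'
    omega
  set P := Pk.filter (fun p => σ p ≤ x) with hPdef
  have hPsub : ∀ p ∈ P, p ∈ Pk ∧ σ p ≤ x := by
    intro p hp; rw [hPdef, Finset.mem_filter] at hp; exact hp
  have hPcard : j + 1 ≤ P.card := by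
    have hsub : S.filter (fun y => y ≤ x) ⊆ P.image σ := by
      intro s hs
      rw [Finset.mem_filter] at hs
      obtain ⟨hs1, hs2⟩ := hs
      rw [← hCP'] at hs1
      obtain ⟨p, hp, rfl⟩ := Finset.mem_image.1 hs1
      exact Finset.mem_image.2 ⟨p, Finset.mem_filter.2 ⟨hp, hs2⟩, rfl⟩
    calc j + 1 = (S.filter (fun y => y ≤ x)).card := (filter_le_sort_card S hj).symm
      _ ≤ (P.image σ).card := Finset.card_le_card hsub
      _ ≤ P.card := Finset.card_image_le
  have hPne : P.Nonempty := Finset.card_pos.1 (by omega)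
  set p0 := P.min' hPne with hp0def
  have hp0P : p0 ∈ P := P.min'_mem hPne
  set U := insert (p0 - 1) (P ∪ P.image (· + 1)) with hUdef
  have hdisj : Disjoint P (P.image (· + 1)) := by
    rw [Finset.disjoint_left]
    intro a haP haI
    obtain ⟨b, hbP, hba⟩ := Finset.mem_image.1 haI
    exact hnonadj b (hPsub b hbP).1 (hba ▸ (hPsub a haP).1)
  have hnotmem : p0 - 1 ∉ P ∪ P.image (· + 1) := by
    intro h
    rcases Finset.mem_union.1 h with h | h
    · have := P.min'_le _ h
      have h2 := (hPk p0 (hPsub p0 hp0P).1).1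
      omega
    · obtain ⟨b, hbP, hba⟩ := Finset.mem_image.1 h
      have := P.min'_le _ hbP
      have h2 := (hPk p0 (hPsub p0 hp0P).1).1
      omega
  have hUcard : U.card = 2 * P.card + 1 := by
    rw [hUdef, Finset.card_insert_of_notMem hnotmem,
      Finset.card_union_of_disjoint hdisj,
      Finset.card_image_of_injective _ (add_left_injective 1)]
    ring
  have hUprop : ∀ u ∈ U, (1 ≤ u ∧ u ≤ n) ∧ σ u ≤ x := by
    intro u hu
    rw [hUdef, Finset.mem_insert, Finset.mem_union] at hu
    rcases hu with rfl | huP | huI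
    · obtain ⟨h1, h2, h3, _⟩ := hPk p0 (hPsub p0 hp0P).1
      exact ⟨⟨by omega, by omega⟩, le_of_lt (lt_of_lt_of_le h3 (hPsub p0 hp0P).2)⟩
    · obtain ⟨h1, h2, _, _⟩ := hPk u (hPsub u huP).1
      exact ⟨⟨by omega, by omega⟩, (hPsub u huP).2⟩
    · obtain ⟨b, hbP, rfl⟩ := Finset.mem_image.1 huI
      obtain ⟨h1, h2, _, h4⟩ := hPk b (hPsub b hbP).1
      exact ⟨⟨by omega, by omega⟩, le_of_lt (lt_of_lt_of_le h4 (hPsub b hbP).2)⟩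
  have hUIcc : (U : Set ℕ) ⊆ Set.Icc 1 n := by
    intro u hu
    have := (hUprop u hu).1
    exact Set.mem_Icc.2 this
  have himgcard : (U.image σ).card = U.card :=
    Finset.card_image_of_injOn (hperm.injOn.mono hUIcc)
  have himgsub : U.image σ ⊆ Finset.Icc 1 x := by
    intro v hv
    obtain ⟨u, hu, rfl⟩ := Finset.mem_image.1 hv
    have h1 := hperm.mapsTo (hUIcc hu)
    rw [Set.mem_Icc] at h1
    exact Finset.mem_Icc.2 ⟨h1.1, (hUprop u hu).2⟩
  have hfinal := Finset.card_le_card himgsub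
  rw [himgcard, hUcard, Nat.card_Icc] at hfinal
  omega

/-- Theorem 2.1: for `S = {i_1 < … < i_k} ⊆ [n]`, some permutation of `[n]` has
circular peak set `S` iff `i_j ≥ 2j+1` for all `j ∈ [k]`. -/
theorem circular_peak_set_nonempty_iff (n : ℕ) (hn : 3 ≤ n) (S : Finset ℕ)
    (hS : S ⊆ Finset.Icc 1 n) :
    (∃ σ : ℕ → ℕ, IsPermOn n σ ∧ CP n σ = S) ↔
      ∀ (j : ℕ) (hj : j < (S.sort (· ≤ ·)).length),
        2 * (j + 1) + 1 ≤ (S.sort (· ≤ ·)).get ⟨j, hj⟩ := by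
  constructor
  · rintro ⟨σ, hperm, hCP⟩
    exact fwd n hn S hS σ hperm hCP
  · intro h
    exact bwd n hn S hS h
end

section
/- Let n ≥ 3. The collection P_n is an abstract simplicial complex on the vertex set [3, n] = {3, 4, ..., n}: (1) the empty set belongs to P_n; (2) for every x with 3 ≤ x ≤ n, the singleton {x} belongs to P_n; (3) every element of P_n is a subset of {3, 4, ..., n}; and (4) if S ∈ P_n and T ⊆ S then T ∈ P_n. -/
open Finset Polynomial

/-- If a finset has more than `j` elements below `s`, the `j`-th element of its sort is `< s`. -/
lemma sorted_getD_lt (F : Finset ℕ) (s j : ℕ)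
    (h : j < (F.filter (· < s)).card) :
    (F.sort (·≤·)).getD j 0 < s := by
  set L := F.sort (·≤·) with hL
  have hjF : j < F.card := lt_of_lt_of_le h (Finset.card_le_card (Finset.filter_subset _ _))
  have hjL : j < L.length := by rwa [hL, Finset.length_sort]
  by_contra hge
  push_neg at hge
  have hmono := (Finset.sortedLT_sort F).strictMono_get
  have key : (F.filter (· < s)).card ≤ (Finset.range j).card := by
    apply Finset.card_le_card_of_injOn (fun x => L.idxOf x)
    · intro x hx
      have hxF : x ∈ F := Finset.mem_filter.1 hx |>.1
      have hxs : x < s := by simpa using (Finset.mem_filter.1 hx).2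
      have hxL : x ∈ L := (Finset.mem_sort _).2 hxF
      have hidx : L.idxOf x < L.length := List.idxOf_lt_length_iff.2 hxL
      have hval : L.get ⟨L.idxOf x, hidx⟩ = x := by
        simpa using List.getElem_idxOf hidx
      have : L.idxOf x < j := by
        by_contra hcon
        push_neg at hcon
        have : L.get ⟨j, hjL⟩ ≤ L.get ⟨L.idxOf x, hidx⟩ :=
          hmono.monotone (by simpa using hcon)
        rw [hval] at this
        rw [List.getD_eq_getElem L 0 hjL] at hge
        have : s ≤ x := le_trans (by simpa using hge) this
        omega
      simpa using this
    · intro x hx y hy hxy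
      have hxF : x ∈ F := (Finset.mem_filter.1 (Finset.mem_coe.1 hx)).1
      have hyF : y ∈ F := (Finset.mem_filter.1 (Finset.mem_coe.1 hy)).1
      have hxL : x ∈ L := (Finset.mem_sort _).2 hxF
      have hyL : y ∈ L := (Finset.mem_sort _).2 hyF
      have hix := List.idxOf_lt_length_iff.2 hxL
      have hiy := List.idxOf_lt_length_iff.2 hyL
      have hidx : L.idxOf x = L.idxOf y := hxy
      rw [← List.getElem_idxOf hix, ← List.getElem_idxOf hiy]
      simp only [hidx]
  rw [Finset.card_range] at key
  omega

lemma sorted_getD_mem (F : Finset ℕ) {j : ℕ} (hj : j < F.card) :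
    (F.sort (·≤·)).getD j 0 ∈ F := by
  have hjL : j < (F.sort (·≤·)).length := by rwa [Finset.length_sort]
  rw [List.getD_eq_getElem _ 0 hjL]
  exact (Finset.mem_sort _).1 (List.getElem_mem hjL)

lemma sorted_getD_strictMono (F : Finset ℕ) {i j : ℕ} (hij : i < j) (hj : j < F.card) :
    (F.sort (·≤·)).getD i 0 < (F.sort (·≤·)).getD j 0 := by
  have hjL : j < (F.sort (·≤·)).length := by rwa [Finset.length_sort]
  have hiL : i < (F.sort (·≤·)).length := lt_trans hij hjL
  rw [List.getD_eq_getElem _ 0 hjL, List.getD_eq_getElem _ 0 hiL]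
  have := (Finset.sortedLT_sort F).strictMono_get
    (show (⟨i, hiL⟩ : Fin _) < ⟨j, hjL⟩ from hij)
  simpa using this

lemma sorted_getD_inj (F : Finset ℕ) {i j : ℕ} (hi : i < F.card) (hj : j < F.card)
    (h : (F.sort (·≤·)).getD i 0 = (F.sort (·≤·)).getD j 0) : i = j := by
  rcases lt_trichotomy i j with hc | hc | hc
  · exact absurd h (ne_of_lt (sorted_getD_strictMono F hc hj))
  · exact hc
  · exact absurd h.symm (ne_of_lt (sorted_getD_strictMono F hc hi))

/-- there are at least `t+1` elements of `F` that are `≤` the `t`-th sorted element -/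
lemma sorted_filter_le_card (F : Finset ℕ) {t : ℕ} (ht : t < F.card) :
    t + 1 ≤ (F.filter (· ≤ (F.sort (·≤·)).getD t 0)).card := by
  have : (Finset.range (t+1)).card ≤ (F.filter (· ≤ (F.sort (·≤·)).getD t 0)).card := by
    apply Finset.card_le_card_of_injOn (fun j => (F.sort (·≤·)).getD j 0)
    · intro j hj
      have hjt : j ≤ t := by simpa [Nat.lt_succ_iff] using hj
      have hjc : j < F.card := lt_of_le_of_lt hjt ht
      refine Finset.mem_filter.2 ⟨sorted_getD_mem F hjc, ?_⟩
      rcases eq_or_lt_of_le hjt with rfl | hlt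
      · simp
      · exact le_of_lt (sorted_getD_strictMono F hlt ht)
    · intro a ha b hb hab
      have ha0 : a < t + 1 := Finset.mem_range.1 (Finset.mem_coe.1 ha)
      have hb0 : b < t + 1 := Finset.mem_range.1 (Finset.mem_coe.1 hb)
      have ha' : a < F.card := by omega
      have hb' : b < F.card := by omega
      exact sorted_getD_inj F ha' hb' hab
  simpa using this
open Finset in
/-- The canonical permutation realizing `S` as circular peak set:
`a₁ s₁ a₂ s₂ … a_k s_k r₁ r₂ …` where `l = s₁<…<s_k` sorts `S` and
`A = a₁<a₂<…` sorts the complement.  -/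
def bp (n : ℕ) (S : Finset ℕ) : ℕ → ℕ := fun i =>
  if i ≤ 2 * S.card then
    (if i % 2 = 0 then (S.sort (·≤·)).getD (i / 2 - 1) 0
     else (((Finset.Icc 1 n) \ S).sort (·≤·)).getD (i / 2) 0)
  else (((Finset.Icc 1 n) \ S).sort (·≤·)).getD (i - S.card - 1) 0

open Finset in
lemma bp_spec (n : ℕ) (S : Finset ℕ) (hn : 3 ≤ n) (hS : S ⊆ Finset.Icc 3 n)
    (hC : ∀ s ∈ S, 2 * (S.filter (· ≤ s)).card + 1 ≤ s) :
    IsPermOn n (bp n S) ∧ CP n (bp n S) = S := by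
  classical
  set k := S.card with hk
  set l := S.sort (·≤·) with hl
  set A := ((Finset.Icc 1 n) \ S).sort (·≤·) with hA
  have hSn : S ⊆ Finset.Icc 1 n := by
    intro x hx
    have := hS hx
    rw [Finset.mem_Icc] at *
    omega
  have hScard : k ≤ n := by
    have := Finset.card_le_card hSn
    simpa [Nat.card_Icc] using this
  have hAcard : ((Finset.Icc 1 n) \ S).card = n - k := by
    rw [Finset.card_sdiff_of_subset hSn, Nat.card_Icc]
    omega
  -- the t-th smallest element of S is at least 2t+3
  have hlmem : ∀ t, t < k → l.getD t 0 ∈ S := fun t ht => sorted_getD_mem S ht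
  have hAmem : ∀ j, j < n - k → A.getD j 0 ∈ (Finset.Icc 1 n) \ S := by
    intro j hj
    exact sorted_getD_mem _ (by rwa [hAcard])
  have hln : ∀ t, t < k → 3 ≤ l.getD t 0 ∧ l.getD t 0 ≤ n := by
    intro t ht
    have := hS (hlmem t ht)
    rwa [Finset.mem_Icc] at this
  have hkey0 : ∀ t, t < k → 2 * t + 3 ≤ l.getD t 0 := by
    intro t ht
    have h1 := hC _ (hlmem t ht)
    have h2 := sorted_filter_le_card S ht
    rw [← hl] at h2
    omega
  have h2k : ∀ t, t < k → 2 * t + 3 ≤ n := by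
    intro t ht
    have := hkey0 t ht
    have := (hln t ht).2
    omega
  -- key counting: many complement elements below l[t]
  have hcnt : ∀ t, t < k →
      t + 2 ≤ (((Finset.Icc 1 n) \ S).filter (· < l.getD t 0)).card := by
    intro t ht
    set s := l.getD t 0 with hs
    have hsS : s ∈ S := hlmem t ht
    have hs3 : 3 ≤ s := (hln t ht).1
    have hsn : s ≤ n := (hln t ht).2
    set c := (S.filter (· ≤ s)).card with hc
    have hcs : 2 * c + 1 ≤ s := hC _ hsS
    have hct : t + 1 ≤ c := sorted_filter_le_card S ht
    -- S.filter (≤ s) = insert s (S.filter (≤ s-1))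
    have hins : S.filter (· ≤ s) = insert s (S.filter (· ≤ s - 1)) := by
      ext x
      simp only [Finset.mem_filter, Finset.mem_insert]
      constructor
      · rintro ⟨hxS, hxs⟩
        by_cases hx : x = s
        · exact Or.inl hx
        · exact Or.inr ⟨hxS, by omega⟩
      · rintro (rfl | ⟨hxS, hxs⟩)
        · exact ⟨hsS, le_refl _⟩
        · exact ⟨hxS, by omega⟩
    have hnotmem : s ∉ S.filter (· ≤ s - 1) := by
      simp only [Finset.mem_filter, not_and]
      intro _
      omega
    have hc1 : c = (S.filter (· ≤ s - 1)).card + 1 := by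
      rw [hc, hins, Finset.card_insert_of_notMem hnotmem]
    -- partition Icc 1 (s-1)
    have hsplit := Finset.card_filter_add_card_filter_not
      (s := Finset.Icc 1 (s-1)) (p := (· ∈ S))
    have hIcc_card : (Finset.Icc 1 (s-1)).card = s - 1 := by
      rw [Nat.card_Icc]; omega
    have heq1 : (Finset.Icc 1 (s-1)).filter (· ∈ S) = S.filter (· ≤ s - 1) := by
      ext x
      simp only [Finset.mem_filter, Finset.mem_Icc]
      constructor
      · rintro ⟨⟨h1, h2⟩, h3⟩; exact ⟨h3, h2⟩
      · rintro ⟨h1, h2⟩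
        have := hS h1
        rw [Finset.mem_Icc] at this
        exact ⟨⟨by omega, h2⟩, h1⟩
    have hsub : (Finset.Icc 1 (s-1)).filter (· ∉ S) ⊆
        ((Finset.Icc 1 n) \ S).filter (· < s) := by
      intro x hx
      simp only [Finset.mem_filter, Finset.mem_Icc, Finset.mem_sdiff] at *
      exact ⟨⟨⟨hx.1.1, by omega⟩, hx.2⟩, by omega⟩
    have hle := Finset.card_le_card hsub
    rw [heq1] at hsplit
    rw [hIcc_card] at hsplit
    omega
  have hkeyA : ∀ t j, t < k → j ≤ t + 1 → A.getD j 0 < l.getD t 0 := by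
    intro t j ht hj
    exact sorted_getD_lt _ _ _ (by have := hcnt t ht; omega)
  -- unfolding lemmas
  have bpe : ∀ t, t < k → bp n S (2*t+2) = l.getD t 0 := by
    intro t ht
    have h1 : 2*t+2 ≤ 2 * k := by omega
    have h2 : (2*t+2) % 2 = 0 := by omega
    have h3 : (2*t+2) / 2 - 1 = t := by omega
    simp only [bp, ← hk, ← hl, if_pos h1, if_pos h2, h3]
  have bpo : ∀ t, t < k → bp n S (2*t+1) = A.getD t 0 := by
    intro t ht
    have h1 : 2*t+1 ≤ 2 * k := by omega
    have h2 : ¬ ((2*t+1) % 2 = 0) := by omega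
    have h3 : (2*t+1) / 2 = t := by omega
    simp only [bp, ← hk, ← hA, if_pos h1, if_neg h2, h3]
  have bpt : ∀ i, 2*k < i → bp n S i = A.getD (i - k - 1) 0 := by
    intro i hi
    have h1 : ¬ (i ≤ 2 * k) := by omega
    simp only [bp, ← hk, ← hA, if_neg h1]
  have classify : ∀ i, 1 ≤ i → i ≤ n →
      (∃ t, t < k ∧ i = 2*t+2) ∨ (∃ t, t < k ∧ i = 2*t+1) ∨ 2*k < i := by
    intro i h1 h2
    by_cases h : i ≤ 2*k
    · rcases Nat.even_or_odd i with he | ho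
      · left; exact ⟨i/2 - 1, by omega, by rcases he with ⟨m, hm⟩; omega⟩
      · right; left; exact ⟨i/2, by rcases ho with ⟨m, hm⟩; omega, by rcases ho with ⟨m, hm⟩; omega⟩
    · right; right; omega
  have hAidx : ∀ i, 2*k < i → i ≤ n → i - k - 1 < n - k := by intro i h1 h2; omega
  have hOidx : ∀ t, t < k → t < n - k := by
    intro t ht
    have h1 := h2k (k-1) (by omega)
    omega
  -- MapsTo
  have hmaps : Set.MapsTo (bp n S) (Set.Icc 1 n) (Set.Icc 1 n) := by
    intro i hi
    rw [Set.mem_Icc] at hi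
    rcases classify i hi.1 hi.2 with ⟨t, ht, rfl⟩ | ⟨t, ht, rfl⟩ | hi'
    · rw [bpe t ht]
      have := hln t ht
      rw [Set.mem_Icc]; omega
    · rw [bpo t ht]
      have := hAmem t (hOidx t ht)
      rw [Finset.mem_sdiff, Finset.mem_Icc] at this
      rw [Set.mem_Icc]; omega
    · rw [bpt _ hi']
      have := hAmem _ (hAidx _ hi' hi.2)
      rw [Finset.mem_sdiff, Finset.mem_Icc] at this
      rw [Set.mem_Icc]; omega
  have hAnotS : ∀ j, j < n - k → A.getD j 0 ∉ S := by
    intro j hj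
    have := hAmem j hj
    rw [Finset.mem_sdiff] at this
    exact this.2
  have hAinj : ∀ a b, a < n - k → b < n - k → A.getD a 0 = A.getD b 0 → a = b := by
    intro a b ha hb h
    exact sorted_getD_inj _ (by rwa [hAcard]) (by rwa [hAcard]) h
  have hlinj : ∀ a b, a < k → b < k → l.getD a 0 = l.getD b 0 → a = b := by
    intro a b ha hb h
    exact sorted_getD_inj _ ha hb h
  -- InjOn
  have hinj : Set.InjOn (bp n S) (Set.Icc 1 n) := by
    intro i hi j hj hij
    rw [Set.mem_Icc] at hi hj
    rcases classify i hi.1 hi.2 with ⟨t, ht, rfl⟩ | ⟨t, ht, rfl⟩ | hi' <;>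
      rcases classify j hj.1 hj.2 with ⟨u, hu, rfl⟩ | ⟨u, hu, rfl⟩ | hj'
    · rw [bpe t ht, bpe u hu] at hij
      have := hlinj t u ht hu hij; omega
    · rw [bpe t ht, bpo u hu] at hij
      exact absurd (hij ▸ hlmem t ht) (hAnotS u (hOidx u hu))
    · rw [bpe t ht, bpt _ hj'] at hij
      exact absurd (hij ▸ hlmem t ht) (hAnotS _ (hAidx _ hj' hj.2))
    · rw [bpo t ht, bpe u hu] at hij
      have h1 := hAnotS t (hOidx t ht)
      rw [hij] at h1
      exact absurd (hlmem u hu) h1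
    · rw [bpo t ht, bpo u hu] at hij
      have := hAinj t u (hOidx t ht) (hOidx u hu) hij; omega
    · rw [bpo t ht, bpt _ hj'] at hij
      have h1 := hAinj t _ (hOidx t ht) (hAidx _ hj' hj.2) hij
      omega
    · rw [bpt _ hi', bpe u hu] at hij
      exact absurd (hij.symm ▸ hlmem u hu) (hAnotS _ (hAidx _ hi' hi.2))
    · rw [bpt _ hi', bpo u hu] at hij
      have := hAinj _ u (hAidx _ hi' hi.2) (hOidx u hu) hij
      omega
    · rw [bpt _ hi', bpt _ hj'] at hij
      have := hAinj _ _ (hAidx _ hi' hi.2) (hAidx _ hj' hj.2) hij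
      omega
  have hbij : IsPermOn n (bp n S) :=
    (Set.Finite.injOn_iff_bijOn_of_mapsTo (Set.finite_Icc 1 n) hmaps).1 hinj
  refine ⟨hbij, ?_⟩
  -- CP = S
  rw [CP]
  apply Finset.Subset.antisymm
  · intro s hs
    rw [Finset.mem_image] at hs
    obtain ⟨i, hi, rfl⟩ := hs
    rw [Finset.mem_filter, Finset.mem_Icc] at hi
    obtain ⟨⟨hi2, hin⟩, hp1, hp2⟩ := hi
    rcases classify i (by omega) (by omega) with ⟨t, ht, rfl⟩ | ⟨t, ht, rfl⟩ | hi' 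
    · rw [bpe t ht]; exact hlmem t ht
    · -- odd position: next is bigger, contradiction
      exfalso
      have he : 2*t+1+1 = 2*t+2 := by omega
      rw [bpo t ht, he, bpe t ht] at hp2
      exact absurd hp2 (not_lt_of_gt (hkeyA t t ht (by omega)))
    · exfalso
      have h1 : 2*k < i + 1 := by omega
      rw [bpt _ hi', bpt _ h1] at hp2
      have : A.getD (i - k - 1) 0 < A.getD (i + 1 - k - 1) 0 := by
        have : i - k - 1 < i + 1 - k - 1 := by omega
        exact sorted_getD_strictMono _ this (by rw [hAcard]; omega)
      omega
  · intro s hs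
    have hsl : s ∈ l := (Finset.mem_sort _).2 hs
    have hidx : l.idxOf s < l.length := List.idxOf_lt_length_iff.2 hsl
    set t := l.idxOf s with htdef
    have htk : t < k := by
      have : l.length = k := Finset.length_sort _
      omega
    have hval : l.getD t 0 = s := by
      rw [List.getD_eq_getElem _ 0 hidx]
      exact List.getElem_idxOf hidx
    have hs3 : 2 * t + 3 ≤ s := hval ▸ hkey0 t htk
    have hsn : s ≤ n := by have := hln t htk; omega
    rw [Finset.mem_image]
    refine ⟨2*t+2, ?_, by rw [bpe t htk, hval]⟩
    rw [Finset.mem_filter, Finset.mem_Icc]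
    refine ⟨⟨by omega, by omega⟩, ?_, ?_⟩
    · have he : 2*t+2-1 = 2*t+1 := by omega
      rw [he, bpo t htk, bpe t htk, hval]
      rw [← hval]
      exact hkeyA t t htk (by omega)
    · rw [bpe t htk, hval]
      have hnext : bp n S (2*t+2+1) = A.getD (t+1) 0 := by
        by_cases hc : t + 1 < k
        · have he : 2*t+2+1 = 2*(t+1)+1 := by omega
          rw [he, bpo (t+1) hc]
        · have he : 2*k < 2*t+2+1 := by omega
          have he2 : 2*t+2+1 - k - 1 = t + 1 := by omega
          rw [bpt _ he, he2]
      rw [hnext, ← hval]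
      exact hkeyA t (t+1) htk (le_refl _)

open Finset in
lemma cp_range (n : ℕ) (σ : ℕ → ℕ) (hn : 3 ≤ n) (h : IsPermOn n σ) :
    CP n σ ⊆ Finset.Icc 3 n := by
  intro s hs
  rw [CP, Finset.mem_image] at hs
  obtain ⟨i, hi, rfl⟩ := hs
  rw [Finset.mem_filter, Finset.mem_Icc] at hi
  obtain ⟨⟨hi2, hin⟩, hp1, hp2⟩ := hi
  have hi1 : (i : ℕ) - 1 ∈ Set.Icc 1 n := by rw [Set.mem_Icc]; omega
  have hi0 : (i : ℕ) ∈ Set.Icc 1 n := by rw [Set.mem_Icc]; omega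
  have hi3 : (i : ℕ) + 1 ∈ Set.Icc 1 n := by rw [Set.mem_Icc]; omega
  have hv1 := h.mapsTo hi1
  have hv3 := h.mapsTo hi3
  have hv0 := h.mapsTo hi0
  rw [Set.mem_Icc] at hv1 hv3 hv0
  have hne : σ (i - 1) ≠ σ (i + 1) := by
    intro hcon
    have := h.injOn hi1 hi3 hcon
    omega
  rw [Finset.mem_Icc]
  omega

open Finset in
lemma cp_necessity (n : ℕ) (σ : ℕ → ℕ) (hn : 3 ≤ n) (h : IsPermOn n σ) :
    ∀ s ∈ CP n σ, 2 * ((CP n σ).filter (· ≤ s)).card + 1 ≤ s := by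
  classical
  intro s hs
  set peaks := (Finset.Icc 2 (n - 1)).filter (fun i => σ (i - 1) < σ i ∧ σ (i + 1) < σ i)
    with hpeaks
  have hpIcc : ∀ i ∈ peaks, 2 ≤ i ∧ i ≤ n - 1 := by
    intro i hi
    rw [hpeaks, Finset.mem_filter, Finset.mem_Icc] at hi
    exact hi.1
  have hpk : ∀ i ∈ peaks, σ (i - 1) < σ i ∧ σ (i + 1) < σ i := by
    intro i hi
    rw [hpeaks, Finset.mem_filter] at hi
    exact hi.2
  have hadj : ∀ i ∈ peaks, i + 1 ∉ peaks := by
    intro i hi hcon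
    have h1 := (hpk i hi).2
    have h2 := (hpk _ hcon).1
    have he : i + 1 - 1 = i := by omega
    rw [he] at h2
    omega
  set F := peaks.filter (fun i => σ i ≤ s) with hF
  have hFp : F ⊆ peaks := Finset.filter_subset _ _
  have hCPf : (CP n σ).filter (· ≤ s) = F.image σ := by
    ext x
    simp only [hF, hpeaks, CP, Finset.mem_filter, Finset.mem_image]
    constructor
    · rintro ⟨⟨i, hi, rfl⟩, hxs⟩
      exact ⟨i, ⟨hi, hxs⟩, rfl⟩
    · rintro ⟨i, ⟨hi, his⟩, rfl⟩
      exact ⟨⟨i, hi, rfl⟩, his⟩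
  have hFne : F.Nonempty := by
    rw [CP, ← hpeaks, Finset.mem_image] at hs
    obtain ⟨i, hi, hix⟩ := hs
    exact ⟨i, Finset.mem_filter.2 ⟨hi, by rw [hix]⟩⟩
  set i0 := F.max' hFne with hi0
  have hi0F : i0 ∈ F := F.max'_mem hFne
  set G := (F ∪ F.image (· - 1)) ∪ {i0 + 1} with hG
  have hGmem : ∀ j, j ∈ G ↔ (j ∈ F ∨ (∃ b ∈ F, b - 1 = j) ∨ j = i0 + 1) := by
    intro j
    rw [hG, Finset.mem_union, Finset.mem_union, Finset.mem_image,
      Finset.mem_singleton, or_assoc]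
  have hGpos : ∀ j ∈ G, 1 ≤ j ∧ j ≤ n := by
    intro j hj
    rcases (hGmem j).1 hj with hj | ⟨b, hb, rfl⟩ | rfl
    · have := hpIcc j (hFp hj); omega
    · have := hpIcc b (hFp hb); omega
    · have := hpIcc i0 (hFp hi0F); omega
  have hGval : ∀ j ∈ G, 1 ≤ σ j ∧ σ j ≤ s := by
    intro j hj
    have hj1 := hGpos j hj
    have hv := h.mapsTo (Set.mem_Icc.2 ⟨hj1.1, hj1.2⟩)
    rw [Set.mem_Icc] at hv
    refine ⟨hv.1, ?_⟩
    rcases (hGmem j).1 hj with hj | ⟨b, hb, rfl⟩ | rfl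
    · exact (Finset.mem_filter.1 hj).2
    · have h1 := (hpk b (hFp hb)).1
      have h2 := (Finset.mem_filter.1 hb).2
      omega
    · have h1 := (hpk i0 (hFp hi0F)).2
      have h2 := (Finset.mem_filter.1 hi0F).2
      omega
  -- cardinality of G
  have himg : (F.image (· - 1)).card = F.card := by
    apply Finset.card_image_of_injOn
    intro a ha b hb hab
    have h2a := (hpIcc a (hFp (Finset.mem_coe.1 ha))).1
    have h2b := (hpIcc b (hFp (Finset.mem_coe.1 hb))).1
    simp only at hab
    omega
  have hdisj1 : Disjoint F (F.image (· - 1)) := by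
    rw [Finset.disjoint_left]
    intro a haF haI
    rw [Finset.mem_image] at haI
    obtain ⟨b, hbF, hb⟩ := haI
    have h2b := (hpIcc b (hFp hbF)).1
    have hba : b = a + 1 := by omega
    exact hadj a (hFp haF) (hba ▸ hFp hbF)
  have hdisj2 : Disjoint (F ∪ F.image (· - 1)) {i0 + 1} := by
    rw [Finset.disjoint_right]
    intro a ha
    rw [Finset.mem_singleton] at ha
    subst ha
    rw [Finset.mem_union, Finset.mem_image]
    rintro (hc | ⟨b, hbF, hb⟩)
    · exact hadj i0 (hFp hi0F) (hFp hc)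
    · have h2b := (hpIcc b (hFp hbF)).1
      have : b = i0 + 2 := by omega
      have := F.le_max' b hbF
      omega
  have hGcard : G.card = 2 * F.card + 1 := by
    rw [hG, Finset.card_union_of_disjoint hdisj2,
      Finset.card_union_of_disjoint hdisj1, himg, Finset.card_singleton]
    ring
  -- σ is injective on G
  have hGinj : Set.InjOn σ ↑G := by
    apply Set.InjOn.mono _ h.injOn
    intro j hj
    have := hGpos j (Finset.mem_coe.1 hj)
    rw [Set.mem_Icc]
    omega
  have hGimg : G.image σ ⊆ Finset.Icc 1 s := by
    intro x hx
    rw [Finset.mem_image] at hx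
    obtain ⟨j, hj, rfl⟩ := hx
    rw [Finset.mem_Icc]
    exact hGval j hj
  have h1 : (G.image σ).card = G.card := Finset.card_image_of_injOn hGinj
  have h2 : (G.image σ).card ≤ s := by
    have := Finset.card_le_card hGimg
    rwa [Nat.card_Icc, Nat.add_sub_cancel] at this
  have h3 : ((CP n σ).filter (· ≤ s)).card = F.card := by
    rw [hCPf]
    apply Finset.card_image_of_injOn
    apply Set.InjOn.mono _ h.injOn
    intro j hj
    have := hpIcc j (hFp (Finset.mem_coe.1 hj))
    rw [Set.mem_Icc]
    omega
  omega

/-- Theorem 3.1: `P_n` is a simplicial complex on the vertex set `[3, n]`. -/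
theorem Pn_isSimplicialComplex (n : ℕ) (hn : 3 ≤ n) :
    (∅ ∈ Pn n) ∧
    (∀ x : ℕ, 3 ≤ x → x ≤ n → ({x} : Finset ℕ) ∈ Pn n) ∧
    (∀ S ∈ Pn n, S ⊆ Finset.Icc 3 n) ∧
    (∀ S ∈ Pn n, ∀ T ⊆ S, T ∈ Pn n) := by
  classical
  have memPn : ∀ S : Finset ℕ, S ⊆ Finset.Icc 3 n →
      (∀ s ∈ S, 2 * (S.filter (· ≤ s)).card + 1 ≤ s) → S ∈ Pn n := by
    intro S h1 h2
    obtain ⟨hperm, hcp⟩ := bp_spec n S hn h1 h2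
    rw [Pn, Finset.mem_filter, Finset.mem_powerset]
    refine ⟨subset_trans h1 ?_, ⟨bp n S, hperm, hcp⟩⟩
    intro x hx
    rw [Finset.mem_Icc] at *
    omega
  refine ⟨?_, ?_, ?_, ?_⟩
  · exact memPn ∅ (by simp) (by simp)
  · intro x h3 hxn
    apply memPn {x}
    · rw [Finset.singleton_subset_iff, Finset.mem_Icc]
      exact ⟨h3, hxn⟩
    · intro s hs
      rw [Finset.mem_singleton] at hs
      subst hs
      rw [Finset.filter_singleton, if_pos (le_refl s), Finset.card_singleton]
      omega
  · intro S hS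
    rw [Pn, Finset.mem_filter] at hS
    obtain ⟨hpow, σ, hperm, hcp⟩ := hS
    rw [← hcp]
    exact cp_range n σ hn hperm
  · intro S hS T hT
    rw [Pn, Finset.mem_filter] at hS
    obtain ⟨hpow, σ, hperm, hcp⟩ := hS
    apply memPn T
    · exact subset_trans hT (hcp ▸ cp_range n σ hn hperm)
    · intro t ht
      have htS : t ∈ S := hT ht
      have h1 := cp_necessity n σ hn hperm t (by rw [hcp]; exact htS)
      have h2 : (T.filter (· ≤ t)).card ≤ (S.filter (· ≤ t)).card :=
        Finset.card_le_card (Finset.filter_subset_filter _ hT)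
      rw [hcp] at h1
      omega
end

section
/- Let n ≥ 3. The maximum cardinality of a set belonging to P_n equals ⌊(n−1)/2⌋; that is, there exists S ∈ P_n with |S| = ⌊(n−1)/2⌋, and every S ∈ P_n satisfies |S| ≤ ⌊(n−1)/2⌋. (Equivalently, the simplicial complex P_n has dimension ⌊(n−1)/2⌋ − 1.) -/
open Finset Polynomial

/-- Theorem 3.2: the maximum cardinality of a member of `P_n` is `⌊(n−1)/2⌋`
(i.e. `dim P_n = ⌊(n−1)/2⌋ − 1`). -/
theorem Pn_dimension (n : ℕ) (hn : 3 ≤ n) :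
    (∃ S ∈ Pn n, S.card = (n - 1) / 2) ∧ (∀ S ∈ Pn n, S.card ≤ (n - 1) / 2) := by
  classical
  constructor
  · -- existence: the zigzag permutation
    set σ : ℕ → ℕ := fun i => if i % 2 = 1 then (i + 1) / 2 else n + 1 - i / 2 with hσ
    have hval_odd : ∀ i, i % 2 = 1 → σ i = (i + 1) / 2 := by
      intro i h; simp [hσ, h]
    have hval_even : ∀ i, i % 2 = 0 → σ i = n + 1 - i / 2 := by
      intro i h; simp [hσ, h]
    have hmaps : Set.MapsTo σ (Set.Icc 1 n) (Set.Icc 1 n) := by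
      intro i hi
      simp only [Set.mem_Icc] at hi ⊢
      rcases Nat.mod_two_eq_zero_or_one i with h | h
      · rw [hval_even i h]; omega
      · rw [hval_odd i h]; omega
    have hinj : Set.InjOn σ (Set.Icc 1 n) := by
      intro i hi j hj heq
      simp only [Set.mem_Icc] at hi hj
      rcases Nat.mod_two_eq_zero_or_one i with h1 | h1 <;>
        rcases Nat.mod_two_eq_zero_or_one j with h2 | h2
      · rw [hval_even i h1, hval_even j h2] at heq; omega
      · rw [hval_even i h1, hval_odd j h2] at heq; omega
      · rw [hval_odd i h1, hval_even j h2] at heq; omega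
      · rw [hval_odd i h1, hval_odd j h2] at heq; omega
    have hsurj : Set.SurjOn σ (Set.Icc 1 n) (Set.Icc 1 n) := by
      intro y hy
      simp only [Set.mem_Icc] at hy
      by_cases hc : y ≤ (n + 1) / 2
      · refine ⟨2 * y - 1, ?_, ?_⟩
        · simp only [Set.mem_Icc]; omega
        · rw [hval_odd (2 * y - 1) (by omega)]; omega
      · refine ⟨2 * (n + 1 - y), ?_, ?_⟩
        · simp only [Set.mem_Icc]; omega
        · rw [hval_even (2 * (n + 1 - y)) (by omega)]; omega
    have hperm : IsPermOn n σ := ⟨hmaps, hinj, hsurj⟩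
    have hpeak : ∀ i, 2 ≤ i → i ≤ n - 1 →
        ((σ (i - 1) < σ i ∧ σ (i + 1) < σ i) ↔ i % 2 = 0) := by
      intro i h2 h3
      rcases Nat.mod_two_eq_zero_or_one i with h | h
      · rw [hval_even i h, hval_odd (i - 1) (by omega), hval_odd (i + 1) (by omega)]
        omega
      · rw [hval_odd i h, hval_even (i - 1) (by omega), hval_even (i + 1) (by omega)]
        omega
    have hF : (Finset.Icc 2 (n - 1)).filter
        (fun i => σ (i - 1) < σ i ∧ σ (i + 1) < σ i)
        = (Finset.Icc 1 ((n - 1) / 2)).image (fun k => 2 * k) := by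
      ext i
      simp only [Finset.mem_filter, Finset.mem_image, Finset.mem_Icc]
      constructor
      · rintro ⟨⟨h2, h3⟩, hp⟩
        rw [hpeak i h2 h3] at hp
        exact ⟨i / 2, by omega, by omega⟩
      · rintro ⟨k, ⟨hk1, hk2⟩, rfl⟩
        have h2 : 2 ≤ 2 * k := by omega
        have h3 : 2 * k ≤ n - 1 := by omega
        exact ⟨⟨h2, h3⟩, (hpeak (2 * k) h2 h3).2 (by omega)⟩
    have hFsub : ↑((Finset.Icc 2 (n - 1)).filter
        (fun i => σ (i - 1) < σ i ∧ σ (i + 1) < σ i)) ⊆ Set.Icc 1 n := by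
      intro x hx
      simp only [Finset.coe_filter, Set.mem_setOf_eq, Finset.mem_Icc] at hx
      simp only [Set.mem_Icc]
      omega
    have hcard : (CP n σ).card = (n - 1) / 2 := by
      rw [CP, Finset.card_image_of_injOn (hinj.mono hFsub), hF,
        Finset.card_image_of_injective _ (fun a b h => by omega), Nat.card_Icc]
      omega
    refine ⟨CP n σ, ?_, hcard⟩
    rw [Pn, Finset.mem_filter, Finset.mem_powerset]
    refine ⟨?_, σ, hperm, rfl⟩
    intro x hx
    rw [CP] at hx
    obtain ⟨i, hi, rfl⟩ := Finset.mem_image.1 hx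
    have := hmaps (hFsub hi)
    simp only [Set.mem_Icc] at this
    simp only [Finset.mem_Icc]
    exact this
  · -- upper bound
    intro S hS
    rw [Pn, Finset.mem_filter] at hS
    obtain ⟨-, σ, hperm, rfl⟩ := hS
    rw [CP]
    calc (((Finset.Icc 2 (n - 1)).filter
          (fun i => σ (i - 1) < σ i ∧ σ (i + 1) < σ i)).image σ).card
        ≤ ((Finset.Icc 2 (n - 1)).filter
          (fun i => σ (i - 1) < σ i ∧ σ (i + 1) < σ i)).card :=
          Finset.card_image_le
      _ ≤ (Finset.Icc 1 ((n - 1) / 2)).card := by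
          apply Finset.card_le_card_of_injOn (fun i => i / 2)
          · intro i hi
            simp only [Finset.mem_coe, Finset.mem_filter, Finset.mem_Icc] at hi
            simp only [Finset.mem_coe, Finset.mem_Icc]
            omega
          · intro i hi j hj heq
            have heq' : i / 2 = j / 2 := heq
            simp only [Finset.mem_coe, Finset.mem_filter, Finset.mem_Icc] at hi hj
            by_contra hne
            have hcase : j = i + 1 ∨ i = j + 1 := by omega
            rcases hcase with rfl | rfl
            · have h1 := hi.2.2
              have h2 := hj.2.1
              simp only [Nat.add_sub_cancel] at h2
              omega
            · have h1 := hj.2.2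
              have h2 := hi.2.1
              simp only [Nat.add_sub_cancel] at h2
              omega
      _ = (n - 1) / 2 := by rw [Nat.card_Icc]; omega
end

section
/- Let n ≥ 3. The number of elements of P_n, i.e. the number of subsets S ⊆ [n] that arise as the circular peak set of some permutation of [n], equals the central binomial coefficient C(n−1, ⌊(n−1)/2⌋). -/
open Finset Polynomial

set_option maxHeartbeats 1000000 in
def good (S : Finset ℕ) : Prop := ∀ s ∈ S, 2 * (S.filter (· ≤ s)).card < s
instance : DecidablePred good := fun S => by unfold good; infer_instance

noncomputable def Fc (n j : ℕ) : ℕ :=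
  ((Finset.Icc 1 n).powerset.filter (fun S => good S ∧ S.card ≤ j)).card

lemma good_card {n : ℕ} {S : Finset ℕ} (hg : good S) (hS : S ⊆ Finset.Icc 1 n)
    (hne : S.Nonempty) : 2 * S.card < n := by
  have hmax := S.max'_mem hne
  have h1 := hg _ hmax
  have h2 : S.filter (· ≤ S.max' hne) = S := by
    apply Finset.filter_true_of_mem
    intro x hx; exact S.le_max' x hx
  rw [h2] at h1
  have := hS hmax
  simp only [Finset.mem_Icc] at this
  omega

lemma Fc_zero (n : ℕ) : Fc n 0 = 1 := by
  have : ((Finset.Icc 1 n).powerset.filter (fun S => good S ∧ S.card ≤ 0)) = {∅} := by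
    ext S
    simp only [Finset.mem_filter, Finset.mem_powerset, Finset.mem_singleton,
      Nat.le_zero, Finset.card_eq_zero]
    constructor
    · rintro ⟨-, -, h⟩; exact h
    · rintro rfl; exact ⟨Finset.empty_subset _, fun s hs => absurd hs (Finset.notMem_empty s), rfl⟩
  rw [Fc, this, Finset.card_singleton]

lemma good_insert_iff {n j : ℕ} (hj : 1 ≤ j) (hjn : 2 * j ≤ n) {S : Finset ℕ}
    (hS : S ⊆ Finset.Icc 1 n) :
    (good (insert (n+1) S) ∧ (insert (n+1) S).card ≤ j) ↔ (good S ∧ S.card ≤ j - 1) := by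
  have hnotmem : (n+1) ∉ S := fun h => by
    have := hS h; simp only [Finset.mem_Icc] at this; omega
  have hcard : (insert (n+1) S).card = S.card + 1 := Finset.card_insert_of_notMem hnotmem
  have hfilter : ∀ s ∈ S, (insert (n+1) S).filter (· ≤ s) = S.filter (· ≤ s) := by
    intro s hs
    have hsn : s ≤ n := by have := hS hs; simp only [Finset.mem_Icc] at this; omega
    rw [Finset.filter_insert]
    simp only [show ¬ (n+1 ≤ s) by omega, if_false]
  constructor
  · rintro ⟨hg, hc⟩
    refine ⟨fun s hs => ?_, by omega⟩
    have := hg s (Finset.mem_insert_of_mem hs)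
    rwa [hfilter s hs] at this
  · rintro ⟨hg, hc⟩
    refine ⟨fun s hs => ?_, by omega⟩
    rcases Finset.mem_insert.mp hs with h | hs
    · subst h
      have he : (insert (n+1) S).filter (· ≤ n+1) = insert (n+1) S := by
        apply Finset.filter_true_of_mem
        intro x hx
        rcases Finset.mem_insert.mp hx with h' | hx
        · omega
        · have := hS hx; simp only [Finset.mem_Icc] at this; omega
      rw [he, hcard]
      omega
    · rw [hfilter s hs]
      exact hg s hs

lemma Fc_rec (n j : ℕ) (hj : 1 ≤ j) (hjn : 2 * j ≤ n) :
    Fc (n + 1) j = Fc n j + Fc n (j - 1) := by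
  classical
  have hicc : Finset.Icc 1 (n + 1) = insert (n + 1) (Finset.Icc 1 n) := by
    ext x; simp only [Finset.mem_Icc, Finset.mem_insert]; omega
  set A := ((Finset.Icc 1 (n+1)).powerset.filter (fun S => good S ∧ S.card ≤ j)) with hA
  have hsplit : (A.filter (fun S => (n+1) ∉ S)).card + (A.filter (fun S => ¬ (n+1) ∉ S)).card
      = A.card := Finset.card_filter_add_card_filter_not _
  have h0 : A.filter (fun S => (n+1) ∉ S)
      = ((Finset.Icc 1 n).powerset.filter (fun S => good S ∧ S.card ≤ j)) := by
    ext S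
    simp only [hA, Finset.mem_filter, Finset.mem_powerset, hicc]
    constructor
    · rintro ⟨⟨h1, h2⟩, h3⟩
      exact ⟨(Finset.subset_insert_iff_of_notMem h3).mp h1, h2⟩
    · rintro ⟨h1, h2⟩
      have hnm : (n+1) ∉ S := fun h => by
        have := h1 h; simp only [Finset.mem_Icc] at this; omega
      exact ⟨⟨h1.trans (Finset.subset_insert _ _), h2⟩, hnm⟩
  have h1 : A.filter (fun S => ¬ (n+1) ∉ S)
      = ((Finset.Icc 1 n).powerset.filter (fun S => good S ∧ S.card ≤ j - 1)).image
          (insert (n+1)) := by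
    ext S
    simp only [hA, Finset.mem_filter, Finset.mem_powerset, Finset.mem_image, not_not, hicc]
    constructor
    · rintro ⟨⟨h1, h2⟩, h3⟩
      refine ⟨S.erase (n+1), ⟨?_, ?_⟩, Finset.insert_erase h3⟩
      · intro x hx
        have hx' := h1 (Finset.mem_of_mem_erase hx)
        rcases Finset.mem_insert.mp hx' with rfl | h
        · exact absurd rfl (Finset.ne_of_mem_erase hx)
        · exact h
      · have := (good_insert_iff hj hjn (S := S.erase (n+1)) ?_).mp ?_
        · exact this
        · intro x hx
          have hx' := h1 (Finset.mem_of_mem_erase hx)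
          rcases Finset.mem_insert.mp hx' with rfl | h
          · exact absurd rfl (Finset.ne_of_mem_erase hx)
          · exact h
        · rwa [Finset.insert_erase h3]
    · rintro ⟨T, ⟨hT1, hT2⟩, rfl⟩
      have := (good_insert_iff hj hjn hT1).mpr hT2
      exact ⟨⟨Finset.insert_subset_insert _ hT1, this⟩, Finset.mem_insert_self _ _⟩
  have hinj : Set.InjOn (insert (n+1))
      (((Finset.Icc 1 n).powerset.filter (fun S => good S ∧ S.card ≤ j - 1) :
        Finset (Finset ℕ)) : Set (Finset ℕ)) := by
    intro S hSm T hTm hST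
    simp only [Finset.coe_filter, Set.mem_setOf_eq, Finset.mem_powerset] at hSm hTm
    have hS' : (n+1) ∉ S := fun h => by
      have := hSm.1 h; simp only [Finset.mem_Icc] at this; omega
    have hT' : (n+1) ∉ T := fun h => by
      have := hTm.1 h; simp only [Finset.mem_Icc] at this; omega
    rw [← Finset.erase_insert hS', ← Finset.erase_insert hT', hST]
  have hcard1 := Finset.card_image_of_injOn hinj
  rw [Fc, ← hsplit, h0, h1, hcard1]
  rfl

lemma Fc_half (j : ℕ) (hj : 1 ≤ j) : Fc (2*j) j = Fc (2*j) (j-1) := by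
  unfold Fc
  congr 1
  apply Finset.filter_congr
  intro S hS
  simp only [Finset.mem_powerset] at hS
  constructor
  · rintro ⟨hg, hc⟩
    refine ⟨hg, ?_⟩
    rcases S.eq_empty_or_nonempty with rfl | hne
    · rw [Finset.card_empty]; omega
    · have := good_card hg hS hne; omega
  · rintro ⟨hg, hc⟩; exact ⟨hg, by omega⟩

theorem Fc_eq : ∀ n j, 2*j+1 ≤ n → Fc n j = (n-1).choose j := by
  intro n
  induction n with
  | zero => intro j h; omega
  | succ n IH =>
    intro j hjn
    rcases Nat.eq_zero_or_pos j with rfl | hj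
    · rw [Fc_zero, Nat.choose_zero_right]
    · have h2j : 2 * j ≤ n := by omega
      rw [Fc_rec n j hj h2j]
      have hn1 : 1 ≤ n := by omega
      rcases Nat.lt_or_ge (2*j) n with hlt | hge
      · -- 2j+1 ≤ n
        rw [IH j (by omega), IH (j-1) (by omega)]
        have hpas : n.choose j = (n-1).choose (j-1) + (n-1).choose j := by
          have : n = (n-1) + 1 := by omega
          rw [this]
          have : j = (j-1) + 1 := by omega
          rw [this, Nat.choose_succ_succ]
          congr 1 <;> omega
        simp only [Nat.add_sub_cancel]
        omega
      · -- n = 2j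
        have hn2j : n = 2*j := by omega
        subst hn2j
        rw [Fc_half j hj, IH (j-1) (by omega)]
        have hsymm : (2*j-1).choose j = (2*j-1).choose (j-1) := by
          have := Nat.choose_symm (n := 2*j-1) (k := j) (by omega)
          rw [show 2*j-1-j = j-1 by omega] at this
          omega
        have hpas : (2*j).choose j = (2*j-1).choose (j-1) + (2*j-1).choose j := by
          have h1 : 2*j = (2*j-1) + 1 := by omega
          have h2 : j = (j-1) + 1 := by omega
          rw [h1, h2, Nat.choose_succ_succ]
          congr 1 <;> omega
        simp only [Nat.add_sub_cancel]
        omega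

/-- interleave `[t1,s1,t2,s2,...,tk,sk,t(k+1)]` -/
def inter : List ℕ → List ℕ → List ℕ
  | [], _ => []
  | t :: _, [] => [t]
  | t :: ts, s :: ss => t :: s :: inter ts ss

theorem inter_perm (b : List ℕ) : ∀ a : List ℕ, a.length = b.length + 1 →
    List.Perm (inter a b) (a ++ b) := by
  induction b with
  | nil =>
    intro a h
    cases a with
    | nil => simp at h
    | cons t ts =>
      have : ts = [] := List.length_eq_zero_iff.mp (by simpa using h)
      subst this
      simp [inter]
  | cons s ss ih =>
    intro a h
    cases a with
    | nil => simp at h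
    | cons t ts =>
      have hts : ts.length = ss.length + 1 := by simpa using h
      simp only [inter, List.cons_append]
      exact List.Perm.cons t ((List.Perm.cons s (ih ts hts)).trans List.perm_middle.symm)

theorem inter_length (b : List ℕ) : ∀ a : List ℕ, a.length = b.length + 1 →
    (inter a b).length = a.length + b.length := by
  intro a h
  rw [(inter_perm b a h).length_eq, List.length_append]

theorem inter_getD_even (b : List ℕ) : ∀ (a : List ℕ) (i : ℕ), a.length = b.length + 1 →
    i < a.length → (inter a b).getD (2*i) 0 = a.getD i 0 := by
  induction b with
  | nil =>
    intro a i h hi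
    cases a with
    | nil => simp at h
    | cons t ts =>
      have : ts = [] := List.length_eq_zero_iff.mp (by simpa using h)
      subst this
      have : i = 0 := by simpa using hi
      subst this
      simp [inter]
  | cons s ss ih =>
    intro a i h hi
    cases a with
    | nil => simp at h
    | cons t ts =>
      have hts : ts.length = ss.length + 1 := by simpa using h
      cases i with
      | zero => simp [inter]
      | succ i =>
        have h2 : 2 * (i + 1) = (2 * i) + 1 + 1 := by ring
        rw [h2]
        simp only [inter, List.getD_cons_succ]
        exact ih ts i hts (by simpa using hi)

theorem inter_getD_odd (b : List ℕ) : ∀ (a : List ℕ) (i : ℕ), a.length = b.length + 1 →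
    i < b.length → (inter a b).getD (2*i+1) 0 = b.getD i 0 := by
  induction b with
  | nil => intro a i h hi; simp at hi
  | cons s ss ih =>
    intro a i h hi
    cases a with
    | nil => simp at h
    | cons t ts =>
      have hts : ts.length = ss.length + 1 := by simpa using h
      cases i with
      | zero => simp [inter]
      | succ i =>
        have h2 : 2 * (i + 1) + 1 = (2 * i + 1) + 1 + 1 := by ring
        rw [h2]
        simp only [inter, List.getD_cons_succ]
        exact ih ts i hts (by simpa using hi)

lemma sorted_getD_lt_s5 {l : List ℕ} (hl : List.Pairwise (· < ·) l) {i j : ℕ} (hij : i < j)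
    (hj : j < l.length) : l.getD i 0 < l.getD j 0 := by
  rw [List.getD_eq_getElem l 0 (by omega), List.getD_eq_getElem l 0 hj]
  exact hl.sortedLT.strictMono_get (show (⟨i, by omega⟩ : Fin l.length) < ⟨j, hj⟩ from hij)

lemma count_le_getD {l : List ℕ} (hl : List.Pairwise (· < ·) l) {i : ℕ} (hi : i < l.length) :
    (l.toFinset.filter (· ≤ l.getD i 0)).card = i + 1 := by
  have hnd : l.Nodup := hl.nodup
  have heq : l.toFinset.filter (· ≤ l.getD i 0) = (l.take (i+1)).toFinset := by
    ext x
    simp only [Finset.mem_filter, List.mem_toFinset]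
    constructor
    · rintro ⟨hx, hle⟩
      obtain ⟨j, hj, rfl⟩ := List.mem_iff_getElem.mp hx
      have hji : j ≤ i := by
        by_contra hc
        have := sorted_getD_lt_s5 hl (show i < j by omega) hj
        rw [List.getD_eq_getElem l 0 hj] at this
        omega
      rw [List.mem_iff_getElem]
      exact ⟨j, by simp [List.length_take]; omega, by rw [List.getElem_take]⟩
    · intro hx
      obtain ⟨j, hj, rfl⟩ := List.mem_iff_getElem.mp hx
      simp only [List.length_take] at hj
      have hj' : j < l.length := by omega
      rw [List.getElem_take]
      refine ⟨List.getElem_mem _, ?_⟩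
      rcases Nat.lt_or_ge j i with h | h
      · exact le_of_lt (by
          have := sorted_getD_lt_s5 hl h hi
          rwa [List.getD_eq_getElem l 0 hj'] at this)
      · have : j = i := by omega
        subst this
        rw [List.getD_eq_getElem l 0 hj']
  rw [heq, List.toFinset_card_of_nodup (hnd.sublist (List.take_sublist _ _)), List.length_take]
  omega

lemma getD_le_of_count {l : List ℕ} (hl : List.Pairwise (· < ·) l) {r v : ℕ}
    (h : r + 1 ≤ (l.toFinset.filter (· ≤ v)).card) : l.getD r 0 ≤ v := by
  have hnd : l.Nodup := hl.nodup
  by_contra hc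
  push_neg at hc
  have hsub : l.toFinset.filter (· ≤ v) ⊆ (l.take r).toFinset := by
    intro x hx
    simp only [Finset.mem_filter, List.mem_toFinset] at hx
    obtain ⟨hx, hle⟩ := hx
    obtain ⟨j, hj, rfl⟩ := List.mem_iff_getElem.mp hx
    have hjr : j < r := by
      by_contra hc2
      have hrj : l.getD r 0 ≤ l[j] := by
        rcases Nat.lt_or_ge r j with h' | h'
        · exact le_of_lt (by
            have := sorted_getD_lt_s5 hl h' hj
            rwa [List.getD_eq_getElem l 0 hj] at this)
        · have : r = j := by omega
          subst this
          rw [List.getD_eq_getElem l 0 hj]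
      omega
    rw [List.mem_toFinset, List.mem_iff_getElem]
    exact ⟨j, by simp [List.length_take]; omega, by rw [List.getElem_take]⟩
  have := (Finset.card_le_card hsub).trans (List.toFinset_card_le _)
  simp only [List.length_take] at this
  omega

lemma good_exists {n : ℕ} {S : Finset ℕ} (hn : 1 ≤ n) (hS : S ⊆ Finset.Icc 1 n) (hg : good S) :
    ∃ σ : ℕ → ℕ, IsPermOn n σ ∧ CP n σ = S := by
  classical
  set k := S.card with hk
  set T := Finset.Icc 1 n \ S with hT
  set lS := S.sort (· ≤ ·) with hlS
  set lT := T.sort (· ≤ ·) with hlT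
  have hlSlen : lS.length = k := Finset.length_sort _
  have hTcard : T.card = n - k := by
    rw [hT, Finset.card_sdiff_of_subset hS, Nat.card_Icc]
    omega
  have hlTlen : lT.length = n - k := by rw [hlT, Finset.length_sort, hTcard]
  have hkn : 2 * k + 1 ≤ n := by
    rcases Nat.eq_zero_or_pos k with h0 | hpos
    · omega
    · have hne : S.Nonempty := Finset.card_pos.mp (by omega)
      have := good_card hg hS hne
      omega
  have hsortS : List.Pairwise (· < ·) lS := (Finset.sortedLT_sort S).pairwise
  have hsortT : List.Pairwise (· < ·) lT := (Finset.sortedLT_sort T).pairwise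
  have htfS : lS.toFinset = S := Finset.sort_toFinset _ _
  have htfT : lT.toFinset = T := Finset.sort_toFinset _ _
  -- the word
  set a := lT.take (k+1) with ha
  set d := lT.drop (k+1) with hd
  have halen : a.length = k + 1 := by rw [ha, List.length_take]; omega
  have hlen' : a.length = lS.length + 1 := by omega
  set w := inter a lS ++ d with hw
  have hilen : (inter a lS).length = 2*k + 1 := by
    rw [inter_length lS a hlen']; omega
  have hwlen : w.length = n := by
    rw [hw, List.length_append, hilen, hd, List.length_drop]; omega
  -- permutation facts
  have hpermw : List.Perm w (lT ++ lS) := by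
    have h1 : List.Perm (inter a lS ++ d) ((a ++ lS) ++ d) :=
      (inter_perm lS a hlen').append_right d
    have h3 : List.Perm (a ++ (lS ++ d)) (a ++ (d ++ lS)) :=
      List.Perm.append_left a List.perm_append_comm
    have h2 : List.Perm w ((a ++ lS) ++ d) := h1
    have h4 : List.Perm ((a ++ lS) ++ d) (a ++ (d ++ lS)) := by
      rw [List.append_assoc]; exact h3
    have h5 : a ++ (d ++ lS) = lT ++ lS := by
      rw [← List.append_assoc, ha, hd, List.take_append_drop]
    exact h5 ▸ (h2.trans h4)
  have hnodupTS : (lT ++ lS).Nodup := by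
    rw [List.nodup_append]
    refine ⟨Finset.sort_nodup _ _, Finset.sort_nodup _ _, ?_⟩
    rintro x hxT _ hxS rfl
    rw [hlT, Finset.mem_sort, hT, Finset.mem_sdiff] at hxT
    rw [hlS, Finset.mem_sort] at hxS
    exact hxT.2 hxS
  have hwnodup : w.Nodup := hpermw.nodup_iff.mpr hnodupTS
  have hwtf : w.toFinset = Finset.Icc 1 n := by
    ext x
    simp only [List.mem_toFinset, hpermw.mem_iff, List.mem_append, hlT, hlS, Finset.mem_sort,
      hT, Finset.mem_sdiff, Finset.mem_Icc]
    constructor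
    · rintro (⟨h1, _⟩ | h)
      · exact h1
      · have := hS h; simp only [Finset.mem_Icc] at this; exact this
    · intro h1
      by_cases hxS : x ∈ S
      · right; exact hxS
      · left; exact ⟨h1, hxS⟩
  -- the permutation as a function
  set σ : ℕ → ℕ := fun p => w.getD (p-1) 0 with hσ
  -- value lemmas
  have V2 : ∀ j, 1 ≤ j → j ≤ k + 1 → σ (2*j - 1) = lT.getD (j-1) 0 := by
    intro j h1 h2
    show w.getD (2*j - 1 - 1) 0 = lT.getD (j-1) 0
    rw [show 2*j - 1 - 1 = 2*(j-1) by omega, hw,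
      List.getD_append _ _ _ _ (by rw [hilen]; omega),
      inter_getD_even lS a (j-1) hlen' (by omega)]
    rw [List.getD_eq_getElem a 0 (by omega), List.getD_eq_getElem lT 0 (by omega)]
    simp only [ha, List.getElem_take]
  have V3 : ∀ j, 1 ≤ j → j ≤ k → σ (2*j) = lS.getD (j-1) 0 := by
    intro j h1 h2
    show w.getD (2*j - 1) 0 = lS.getD (j-1) 0
    rw [show 2*j - 1 = 2*(j-1) + 1 by omega, hw,
      List.getD_append _ _ _ _ (by rw [hilen]; omega),
      inter_getD_odd lS a (j-1) hlen' (by omega)]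
  have V1 : ∀ p, 2*k+1 ≤ p → p ≤ n → σ p = lT.getD (p - k - 1) 0 := by
    intro p h1 h2
    rcases Nat.eq_or_lt_of_le h1 with heq | hgt
    · have := V2 (k+1) (by omega) (by omega)
      rw [show 2*(k+1) - 1 = p by omega] at this
      rw [this]
      congr 1
      omega
    · show w.getD (p - 1) 0 = lT.getD (p - k - 1) 0
      rw [hw, List.getD_append_right _ _ _ _ (by rw [hilen]; omega), hilen]
      have hidx : p - 1 - (2*k+1) < d.length := by
        rw [hd, List.length_drop]; omega
      rw [List.getD_eq_getElem d 0 hidx, List.getD_eq_getElem lT 0 (by rw [hlTlen]; omega)]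
      have hix : k + 1 + (p - 1 - (2*k+1)) = p - k - 1 := by omega
      simp only [hd, List.getElem_drop, hix]
  -- inequalities
  have I4 : ∀ j, 1 ≤ j → j ≤ k → lT.getD j 0 < lS.getD (j-1) 0 := by
    intro j h1 h2
    set v := lS.getD (j-1) 0 with hv
    have hvS : v ∈ S := by
      rw [← htfS, hv, List.getD_eq_getElem lS 0 (by omega)]
      exact List.mem_toFinset.mpr (List.getElem_mem _)
    have hvn : v ≤ n := by
      have := hS hvS; simp only [Finset.mem_Icc] at this; omega
    have hcountS : (S.filter (· ≤ v)).card = j := by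
      have hcc := count_le_getD hsortS (show j-1 < lS.length by omega)
      rw [htfS, ← hv] at hcc
      omega
    have hgv := hg v hvS
    rw [hcountS] at hgv
    have hfT : T.filter (· ≤ v) = (Finset.Icc 1 v) \ (S.filter (· ≤ v)) := by
      ext x
      simp only [hT, Finset.mem_filter, Finset.mem_sdiff, Finset.mem_Icc]
      constructor
      · rintro ⟨⟨⟨hx1, hxn⟩, hxS⟩, hxv⟩
        exact ⟨⟨hx1, hxv⟩, fun h => hxS h.1⟩
      · rintro ⟨⟨hx1, hxv⟩, hns⟩
        exact ⟨⟨⟨hx1, by omega⟩, fun hxS => hns ⟨hxS, hxv⟩⟩, hxv⟩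
    have hfTcard : (T.filter (· ≤ v)).card = v - j := by
      have hsub : S.filter (· ≤ v) ⊆ Finset.Icc 1 v := by
        intro x hx
        rw [Finset.mem_filter] at hx
        have := hS hx.1
        simp only [Finset.mem_Icc] at this ⊢
        exact ⟨this.1, hx.2⟩
      rw [hfT, Finset.card_sdiff_of_subset hsub, hcountS, Nat.card_Icc]
      omega
    have hle : lT.getD j 0 ≤ v := by
      apply getD_le_of_count hsortT
      rw [htfT, hfTcard]
      omega
    have hjlen : j < lT.length := by rw [hlTlen]; omega
    have hTmem : lT.getD j 0 ∈ T := by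
      rw [← htfT, List.getD_eq_getElem lT 0 hjlen]
      exact List.mem_toFinset.mpr (List.getElem_mem _)
    have hne : lT.getD j 0 ≠ v := by
      intro h
      rw [hT, Finset.mem_sdiff] at hTmem
      rw [h] at hTmem
      exact hTmem.2 hvS
    omega
  have I3 : ∀ j, 1 ≤ j → j ≤ k → lT.getD (j-1) 0 < lS.getD (j-1) 0 := by
    intro j h1 h2
    exact lt_trans (sorted_getD_lt_s5 hsortT (show j - 1 < j by omega) (by rw [hlTlen]; omega))
      (I4 j h1 h2)
  -- bijectivity
  have hmaps : ∀ p, 1 ≤ p → p ≤ n → σ p ∈ Finset.Icc 1 n := by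
    intro p h1 h2
    rw [← hwtf]
    show w.getD (p-1) 0 ∈ w.toFinset
    rw [List.getD_eq_getElem w 0 (by omega)]
    exact List.mem_toFinset.mpr (List.getElem_mem _)
  have hpermσ : IsPermOn n σ := by
    refine ⟨?_, ?_, ?_⟩
    · intro p hp
      have := hmaps p hp.1 hp.2
      rw [Finset.mem_Icc] at this
      exact ⟨this.1, this.2⟩
    · intro p hp q hq hpq
      obtain ⟨hpa, hpb⟩ := hp
      obtain ⟨hqa, hqb⟩ := hq
      have hp1 : p - 1 < w.length := by rw [hwlen]; omega
      have hq1 : q - 1 < w.length := by rw [hwlen]; omega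
      have heq : w[p-1] = w[q-1] := by
        rw [← List.getD_eq_getElem w 0 hp1, ← List.getD_eq_getElem w 0 hq1]
        exact hpq
      have := (List.Nodup.getElem_inj_iff hwnodup).mp heq
      omega
    · intro v hv
      have hvw : v ∈ w := by
        rw [← List.mem_toFinset, hwtf, Finset.mem_Icc]
        exact ⟨hv.1, hv.2⟩
      obtain ⟨i, hi, hiv⟩ := List.mem_iff_getElem.mp hvw
      refine ⟨i + 1, ⟨by omega, by rw [hwlen] at hi; omega⟩, ?_⟩
      show w.getD (i + 1 - 1) 0 = v
      rw [Nat.add_sub_cancel, List.getD_eq_getElem w 0 hi]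
      exact hiv
  -- CP = S
  have hCP : CP n σ = S := by
    ext x
    constructor
    · intro hx
      rw [CP, Finset.mem_image] at hx
      obtain ⟨i, hi, rfl⟩ := hx
      rw [Finset.mem_filter, Finset.mem_Icc] at hi
      obtain ⟨⟨hi2, hin⟩, hl, hr⟩ := hi
      rcases Nat.lt_or_ge i (2*k+1) with hcase | hcase
      · rcases Nat.even_or_odd i with he | ho
        · obtain ⟨j, hj⟩ := he
          have hval : σ i = lS.getD (j-1) 0 := by
            rw [show i = 2*j by omega]; exact V3 j (by omega) (by omega)
          rw [hval, ← htfS, List.getD_eq_getElem lS 0 (by omega)]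
          exact List.mem_toFinset.mpr (List.getElem_mem _)
        · exfalso
          obtain ⟨j, hj⟩ := ho
          have hj1 : 1 ≤ j := by omega
          have hL : σ (i-1) = lS.getD (j-1) 0 := by
            rw [show i - 1 = 2*j by omega]; exact V3 j hj1 (by omega)
          have hC : σ i = lT.getD j 0 := by
            have := V2 (j+1) (by omega) (by omega)
            rw [show 2*(j+1) - 1 = i by omega] at this
            rw [this]
            simp only [Nat.add_sub_cancel]
          have := I4 j hj1 (by omega)
          omega
      · exfalso
        have hC : σ i = lT.getD (i - k - 1) 0 := V1 i hcase (by omega)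
        have hR : σ (i+1) = lT.getD (i - k) 0 := by
          have := V1 (i+1) (by omega) (by omega)
          rw [this]
          congr 1
          omega
        have hmono : lT.getD (i-k-1) 0 < lT.getD (i-k) 0 :=
          sorted_getD_lt_s5 hsortT (by omega) (by rw [hlTlen]; omega)
        omega
    · intro hx
      have hx' : x ∈ lS.toFinset := by rw [htfS]; exact hx
      rw [List.mem_toFinset] at hx'
      obtain ⟨i0, hi0, hxv⟩ := List.mem_iff_getElem.mp hx'
      have hi0k : i0 < k := by omega
      rw [CP, Finset.mem_image]
      have hV3 : σ (2*(i0+1)) = lS.getD i0 0 := by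
        have := V3 (i0+1) (by omega) (by omega)
        rw [this]
        simp only [Nat.add_sub_cancel]
      refine ⟨2*(i0+1), ?_, ?_⟩
      · rw [Finset.mem_filter, Finset.mem_Icc]
        refine ⟨⟨by omega, by omega⟩, ?_, ?_⟩
        · have h1 : σ (2*(i0+1) - 1) = lT.getD i0 0 := by
            have := V2 (i0+1) (by omega) (by omega)
            rw [this]
            simp only [Nat.add_sub_cancel]
          rw [h1, hV3]
          have := I3 (i0+1) (by omega) (by omega)
          simpa using this
        · have h1 : σ (2*(i0+1) + 1) = lT.getD (i0+1) 0 := by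
            have := V2 (i0+2) (by omega) (by omega)
            rw [show 2*(i0+2) - 1 = 2*(i0+1) + 1 by omega] at this
            rw [this, show i0+2-1 = i0+1 by omega]
          rw [h1, hV3]
          have := I4 (i0+1) (by omega) (by omega)
          simpa using this
      · rw [hV3, List.getD_eq_getElem lS 0 (by omega)]
        exact hxv
  exact ⟨σ, hpermσ, hCP⟩

lemma CP_subset {n : ℕ} {σ : ℕ → ℕ} (hσ : IsPermOn n σ) : CP n σ ⊆ Finset.Icc 1 n := by
  intro x hx
  rw [CP, Finset.mem_image] at hx
  obtain ⟨i, hi, rfl⟩ := hx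
  rw [Finset.mem_filter, Finset.mem_Icc] at hi
  have : σ i ∈ Set.Icc 1 n := hσ.1 ⟨by omega, by omega⟩
  simpa [Finset.mem_Icc] using this

lemma CP_good {n : ℕ} {σ : ℕ → ℕ} (hσ : IsPermOn n σ) : good (CP n σ) := by
  classical
  intro s hs
  set P := (Finset.Icc 2 (n-1)).filter (fun i => σ (i - 1) < σ i ∧ σ (i + 1) < σ i) with hP
  set Q := P.filter (fun i => σ i ≤ s) with hQdef
  have hQ' : ∀ i ∈ Q, (2 ≤ i ∧ i ≤ n - 1) ∧ (σ (i-1) < σ i ∧ σ (i+1) < σ i) ∧ σ i ≤ s := by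
    intro i hi
    simp only [hQdef, hP, Finset.mem_filter, Finset.mem_Icc] at hi
    exact ⟨hi.1.1, hi.1.2, hi.2⟩
  -- Q is nonempty since s itself is a peak value ≤ s
  obtain ⟨i₀, hi₀, hσi₀⟩ := Finset.mem_image.mp hs
  have hi₀Q : i₀ ∈ Q := by
    rw [hQdef, Finset.mem_filter]
    exact ⟨hi₀, le_of_eq hσi₀⟩
  have hQne : Q.Nonempty := ⟨i₀, hi₀Q⟩
  set m := Q.min' hQne with hm
  have hmQ : m ∈ Q := Q.min'_mem hQne
  have hm2 : 2 ≤ m := (hQ' m hmQ).1.1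
  -- key1 : filtered CP is the image of Q
  have key1 : (CP n σ).filter (· ≤ s) = Q.image σ := by
    ext x
    simp only [Finset.mem_filter, CP, Finset.mem_image, hQdef, hP, Finset.mem_filter]
    constructor
    · rintro ⟨⟨i, hi, rfl⟩, hle⟩
      exact ⟨i, ⟨hi, hle⟩, rfl⟩
    · rintro ⟨i, ⟨hi, hle⟩, rfl⟩
      exact ⟨⟨i, hi, rfl⟩, hle⟩
  have hinjIcc : Set.InjOn σ (Set.Icc 1 n) := hσ.2.1
  have hQsubIcc : (Q : Set ℕ) ⊆ Set.Icc 1 n := by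
    intro i hi
    have := (hQ' i hi).1
    exact ⟨by omega, by omega⟩
  have hcardQ : (Q.image σ).card = Q.card :=
    Finset.card_image_of_injOn (hinjIcc.mono hQsubIcc)
  -- the big set of positions
  set R := (Q ∪ Q.image (· + 1)) ∪ {m - 1} with hR
  have hdisj1 : Disjoint Q (Q.image (· + 1)) := by
    rw [Finset.disjoint_left]
    intro a haQ haI
    obtain ⟨j, hjQ, hja⟩ := Finset.mem_image.mp haI
    have h1 := (hQ' j hjQ).2.1.2
    have h2 := (hQ' a haQ).2.1.1
    rw [← hja] at h2
    simp only [Nat.add_sub_cancel] at h2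
    omega
  have hdisj2 : m - 1 ∉ Q ∪ Q.image (· + 1) := by
    intro hmem
    rcases Finset.mem_union.mp hmem with h | h
    · have := Q.min'_le _ h
      omega
    · obtain ⟨j, hjQ, hja⟩ := Finset.mem_image.mp h
      have := Q.min'_le _ hjQ
      omega
  have hcard1 : (Q.image (· + 1)).card = Q.card :=
    Finset.card_image_of_injOn (fun a _ b _ h => by omega)
  have hcardR : R.card = 2 * Q.card + 1 := by
    rw [hR, Finset.card_union_of_disjoint (Finset.disjoint_singleton_right.mpr hdisj2),
      Finset.card_union_of_disjoint hdisj1, hcard1, Finset.card_singleton]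
    ring
  have hRsubIcc : (R : Set ℕ) ⊆ Set.Icc 1 n := by
    intro a ha
    simp only [hR, Finset.coe_union, Set.mem_union, Finset.coe_singleton, Set.mem_singleton_iff,
      Finset.mem_coe] at ha
    rcases ha with (h | h) | h
    · exact hQsubIcc h
    · obtain ⟨j, hjQ, hja⟩ := Finset.mem_image.mp h
      have := (hQ' j hjQ).1
      exact ⟨by omega, by omega⟩
    · subst h
      have := (hQ' m hmQ).1
      exact ⟨by omega, by omega⟩
  have hcardRim : (R.image σ).card = R.card :=
    Finset.card_image_of_injOn (hinjIcc.mono hRsubIcc)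
  have hRim : R.image σ ⊆ Finset.Icc 1 s := by
    intro x hx
    obtain ⟨a, ha, rfl⟩ := Finset.mem_image.mp hx
    have h1 : 1 ≤ σ a := by
      have : σ a ∈ Set.Icc 1 n := hσ.1 (hRsubIcc (Finset.mem_coe.mpr ha))
      exact this.1
    rw [Finset.mem_Icc]
    refine ⟨h1, ?_⟩
    simp only [hR, Finset.mem_union, Finset.mem_singleton] at ha
    rcases ha with (h | h) | h
    · exact (hQ' a h).2.2
    · obtain ⟨j, hjQ, hja⟩ := Finset.mem_image.mp h
      have h1 := (hQ' j hjQ).2.1.2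
      have h2 := (hQ' j hjQ).2.2
      have hsa : σ a = σ (j + 1) := by rw [← hja]
      omega
    · subst h
      have h1 := (hQ' m hmQ).2.1.1
      have h2 := (hQ' m hmQ).2.2
      omega
  have hfin : 2 * Q.card + 1 ≤ s := by
    have := Finset.card_le_card hRim
    rw [hcardRim, hcardR] at this
    simpa [Nat.card_Icc] using this
  rw [key1, hcardQ]
  omega


/-- Lemma 3.1: `|P_n| = C(n−1, ⌊(n−1)/2⌋)`. -/
theorem Pn_card (n : ℕ) (hn : 3 ≤ n) :
    (Pn n).card = Nat.choose (n - 1) ((n - 1) / 2) := by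
  classical
  have hPn : Pn n = (Finset.Icc 1 n).powerset.filter
      (fun S => good S ∧ S.card ≤ (n-1)/2) := by
    ext S
    simp only [Pn, Finset.mem_filter, Finset.mem_powerset]
    constructor
    · rintro ⟨hsub, σ, hσ, rfl⟩
      have hg : good (CP n σ) := CP_good hσ
      refine ⟨hsub, hg, ?_⟩
      rcases (CP n σ).eq_empty_or_nonempty with he | hne
      · rw [he]; simp
      · have := good_card hg hsub hne
        omega
    · rintro ⟨hsub, hg, hcard⟩
      obtain ⟨σ, h1, h2⟩ := good_exists (by omega) hsub hg
      exact ⟨hsub, σ, h1, h2⟩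
  have h := Fc_eq n ((n-1)/2) (by omega)
  rw [hPn]
  exact h
end

section
/- Let n ≥ 3 be odd. Then the poset P_{n+1} (subsets of [n+1] arising as circular peak sets of permutations of [n+1], ordered by inclusion) is order-isomorphic to the subposet of the product poset {0,1} × P_n obtained by removing all pairs (1, S) with |S| = ⌊(n−1)/2⌋, where {0,1} carries the order 0 < 1 and the product is ordered componentwise. An explicit isomorphism sends S ∈ P_{n+1} to (1, S \ {n+1}) if n+1 ∈ S and to (0, S) otherwise. -/
open Finset Polynomial

/-- The goodness condition characterizing circular peak sets. -/
def Good (n : ℕ) (S : Finset ℕ) : Prop :=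
  S ⊆ Finset.Icc 1 n ∧ ∀ s ∈ S, 2 * (S.filter (· ≤ s)).card < s

lemma sort_getD_mem {A : Finset ℕ} {j : ℕ} (hj : j < A.card) :
    (A.sort (·≤·)).getD j 0 ∈ A := by
  have hl : j < (A.sort (·≤·)).length := by rwa [Finset.length_sort]
  rw [← Finset.mem_sort (α := ℕ) (·≤·), List.getD_eq_getElem _ 0 hl]
  exact List.getElem_mem hl

lemma sort_getD_lt {A : Finset ℕ} {i j : ℕ} (hij : i < j) (hj : j < A.card) :
    (A.sort (·≤·)).getD i 0 < (A.sort (·≤·)).getD j 0 := by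
  have hs : List.Pairwise (· < ·) (A.sort (·≤·)) := A.sortedLT_sort.pairwise
  have hl : j < (A.sort (·≤·)).length := by rwa [Finset.length_sort]
  have hl' : i < (A.sort (·≤·)).length := lt_trans hij hl
  rw [List.getD_eq_getElem _ 0 hl, List.getD_eq_getElem _ 0 hl']
  simpa using hs.rel_get_of_lt (a := ⟨i, hl'⟩) (b := ⟨j, hl⟩) (by simpa using hij)

lemma getD_inj {A : Finset ℕ} {i j : ℕ} (hi : i < A.card) (hj : j < A.card)
    (h : (A.sort (·≤·)).getD i 0 = (A.sort (·≤·)).getD j 0) : i = j := by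
  rcases lt_trichotomy i j with h' | h' | h'
  · exact absurd h (ne_of_lt (sort_getD_lt h' hj))
  · exact h'
  · exact absurd h.symm (ne_of_lt (sort_getD_lt h' hi))

lemma count_le_of_le_getD {A : Finset ℕ} {i x : ℕ} (hi : i < A.card)
    (h : x ≤ (A.sort (·≤·)).getD i 0) : (A.filter (· < x)).card ≤ i := by
  classical
  set l := A.sort (·≤·) with hl
  have hil : i < l.length := by rwa [Finset.length_sort]
  have hsub : A.filter (· < x) ⊆ (l.take i).toFinset := by
    intro c hc
    rw [Finset.mem_filter] at hc
    obtain ⟨hcA, hcx⟩ := hc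
    have hcl : c ∈ l := (Finset.mem_sort (α := ℕ) (·≤·)).2 hcA
    obtain ⟨m, hm, hmc⟩ := List.mem_iff_getElem.1 hcl
    have hmi : m < i := by
      by_contra hmi
      push_neg at hmi
      have : l.getD i 0 ≤ l[m] := by
        rcases eq_or_lt_of_le hmi with rfl | hlt
        · rw [List.getD_eq_getElem _ 0 hm]
        · exact le_of_lt (by
            have := sort_getD_lt (A := A) hlt (by rwa [← Finset.length_sort (α := ℕ) (·≤·)])
            rwa [List.getD_eq_getElem _ 0 hm] at this)
      omega
    rw [List.mem_toFinset]
    rw [← hmc]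
    exact List.mem_take_iff_getElem.2 ⟨m, by simp [hmi, hm], rfl⟩
  calc (A.filter (· < x)).card ≤ (l.take i).toFinset.card := Finset.card_le_card hsub
    _ ≤ (l.take i).length := (l.take i).toFinset_card_le
    _ ≤ i := by simp

lemma lt_count_of_getD_lt {A : Finset ℕ} {i x : ℕ} (hi : i < A.card)
    (h : (A.sort (·≤·)).getD i 0 < x) : i + 1 ≤ (A.filter (· < x)).card := by
  classical
  set l := A.sort (·≤·) with hl
  have hil : i < l.length := by rwa [Finset.length_sort]
  have hsub : (l.take (i+1)).toFinset ⊆ A.filter (· < x) := by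
    intro c hc
    rw [List.mem_toFinset] at hc
    obtain ⟨m, hm, hmc⟩ := List.mem_iff_getElem.1 hc
    have hml : m < l.length := by
      have := hm
      rw [List.length_take] at this
      omega
    rw [List.getElem_take] at hmc
    have hmi : m < i + 1 := lt_of_lt_of_le hm (by simp)
    have hcle : c ≤ l.getD i 0 := by
      rcases eq_or_lt_of_le (Nat.lt_succ_iff.1 hmi) with rfl | hlt
      · rw [List.getD_eq_getElem _ 0 hml, hmc]
      · have h2 := sort_getD_lt (A := A) hlt hi
        rw [← hl, List.getD_eq_getElem _ 0 hml] at h2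
        exact le_of_lt (hmc ▸ h2)
    refine Finset.mem_filter.2 ⟨?_, by omega⟩
    exact (Finset.mem_sort (α := ℕ) (·≤·)).1 (hmc ▸ List.getElem_mem hml)
  have hnd : (l.take (i+1)).Nodup := (List.take_sublist _ _).nodup (A.sort_nodup _)
  have : (l.take (i+1)).toFinset.card = min (i+1) l.length := by
    rw [List.toFinset_card_of_nodup hnd, List.length_take]
  have hmin : min (i+1) l.length = i + 1 := by omega
  calc i + 1 = (l.take (i+1)).toFinset.card := by omega
    _ ≤ (A.filter (· < x)).card := Finset.card_le_card hsub
lemma good_CP {n : ℕ} {σ : ℕ → ℕ} (hσ : IsPermOn n σ) : Good n (CP n σ) := by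
  classical
  constructor
  · intro x hx
    simp only [CP, Finset.mem_image, Finset.mem_filter, Finset.mem_Icc] at hx
    obtain ⟨i, ⟨⟨h2, h1⟩, _⟩, rfl⟩ := hx
    have hi : i ∈ Set.Icc 1 n := by
      simp only [Set.mem_Icc]; omega
    have := hσ.mapsTo hi
    simpa [Finset.mem_Icc, Set.mem_Icc] using this
  · intro s hs
    set PK := (Finset.Icc 2 (n-1)).filter (fun i => σ (i - 1) < σ i ∧ σ (i + 1) < σ i) with hPK
    have hPKsub : ∀ i ∈ PK, 2 ≤ i ∧ i ≤ n - 1 := by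
      intro i hi
      rw [hPK, Finset.mem_filter, Finset.mem_Icc] at hi
      exact hi.1
    have hadj : ∀ i ∈ PK, i + 1 ∉ PK := by
      intro i hi hi1
      rw [hPK, Finset.mem_filter] at hi hi1
      have h1 := hi.2.2
      have h2 := hi1.2.1
      simp only [Nat.add_sub_cancel] at h2
      omega
    set T := PK.filter (fun i => σ i ≤ s) with hT
    -- CP.filter (≤ s) is the image of T
    have himg : (CP n σ).filter (· ≤ s) = T.image σ := by
      rw [CP, ← hPK, hT, Finset.filter_image]
    have hTsub : ∀ i ∈ T, 2 ≤ i ∧ i ≤ n - 1 := fun i hi => hPKsub i (Finset.mem_filter.1 hi).1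
    have hinj : Set.InjOn σ (Set.Icc 1 n) := hσ.injOn
    have hn3 : 2 ≤ n - 1 ∨ T = ∅ := by
      rcases Finset.eq_empty_or_nonempty T with h | h
      · exact Or.inr h
      · obtain ⟨i, hi⟩ := h
        have := hTsub i hi
        omega
    have hcardT : ((CP n σ).filter (· ≤ s)).card = T.card := by
      rw [himg]
      apply Finset.card_image_of_injOn
      intro a ha b hb hab
      have ha' := hTsub a ha
      have hb' := hTsub b hb
      exact hinj (by simp only [Set.mem_Icc]; omega) (by simp only [Set.mem_Icc]; omega) hab
    -- T is nonempty
    have hTne : T.Nonempty := by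
      simp only [CP, ← hPK, Finset.mem_image] at hs
      obtain ⟨i, hi, hsi⟩ := hs
      exact ⟨i, Finset.mem_filter.2 ⟨hi, by omega⟩⟩
    set N := T.image (· + 1) ∪ T.image (· - 1) with hN
    have hNval : ∀ i ∈ N, σ i < s ∧ 1 ≤ i ∧ i ≤ n := by
      intro i hi
      rw [hN, Finset.mem_union, Finset.mem_image, Finset.mem_image] at hi
      rcases hi with ⟨t, ht, rfl⟩ | ⟨t, ht, rfl⟩
      · obtain ⟨htPK, hts⟩ := Finset.mem_filter.1 ht
        have hpk := (Finset.mem_filter.1 htPK).2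
        have hb := hPKsub t htPK
        exact ⟨by omega, by omega, by omega⟩
      · obtain ⟨htPK, hts⟩ := Finset.mem_filter.1 ht
        have hpk := (Finset.mem_filter.1 htPK).2
        have hb := hPKsub t htPK
        exact ⟨by omega, by omega, by omega⟩
    have hTN : Disjoint T N := by
      rw [Finset.disjoint_right]
      intro i hiN hiT
      rw [hN, Finset.mem_union, Finset.mem_image, Finset.mem_image] at hiN
      have hiPK : i ∈ PK := (Finset.mem_filter.1 hiT).1
      rcases hiN with ⟨t, ht, rfl⟩ | ⟨t, ht, rfl⟩
      · exact hadj t (Finset.mem_filter.1 ht).1 hiPK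
      · have htPK := (Finset.mem_filter.1 ht).1
        have hb := hPKsub t htPK
        have : t - 1 + 1 = t := by omega
        exact hadj (t-1) hiPK (this ▸ htPK)
    -- card N ≥ card T + 1
    have hNcard : T.card + 1 ≤ N.card := by
      set a := T.min' hTne with ha
      have haT : a ∈ T := T.min'_mem hTne
      have ha2 : 2 ≤ a := (hTsub a haT).1
      have hsub2 : insert (a - 1) (T.image (· + 1)) ⊆ N := by
        intro x hx
        rw [Finset.mem_insert] at hx
        rcases hx with rfl | hx
        · exact Finset.mem_union_right _ (Finset.mem_image.2 ⟨a, haT, rfl⟩)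
        · exact Finset.mem_union_left _ hx
      have hnm : a - 1 ∉ T.image (· + 1) := by
        rw [Finset.mem_image]
        rintro ⟨t, ht, htm⟩
        have := T.min'_le t ht
        omega
      calc T.card + 1 = (T.image (· + 1)).card + 1 := by
            rw [Finset.card_image_of_injective _ (add_left_injective 1)]
        _ = (insert (a - 1) (T.image (· + 1))).card := (Finset.card_insert_of_notMem hnm).symm
        _ ≤ N.card := Finset.card_le_card hsub2
    -- inject T ∪ N into Icc 1 s
    have hmain : (T ∪ N).card ≤ s := by
      have := Finset.card_le_card_of_injOn (f := σ) (t := Finset.Icc 1 s) ?_ ?_ (s := T ∪ N)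
      · simpa [Nat.card_Icc] using this
      · intro i hi
        rw [Finset.mem_coe, Finset.mem_union] at hi
        rcases hi with hi | hi
        · have hb := hTsub i hi
          have h1 : σ i ∈ Set.Icc 1 n := hσ.mapsTo (by simp only [Set.mem_Icc]; omega)
          have h2 : σ i ≤ s := (Finset.mem_filter.1 hi).2
          simp only [Finset.mem_coe, Finset.mem_Icc]
          exact ⟨h1.1, h2⟩
        · have hb := hNval i hi
          have h1 : σ i ∈ Set.Icc 1 n := hσ.mapsTo (by simp only [Set.mem_Icc]; omega)
          simp only [Finset.mem_coe, Finset.mem_Icc]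
          exact ⟨h1.1, by omega⟩
      · intro a ha b hb hab
        rw [Finset.coe_union] at ha hb
        have hbnd : ∀ c, c ∈ (T : Set ℕ) ∪ (N : Set ℕ) → 1 ≤ c ∧ c ≤ n := by
          intro c hc
          rcases hc with hc | hc
          · have := hTsub c hc; omega
          · have := hNval c hc; omega
        have h1 := hbnd a ha
        have h2 := hbnd b hb
        exact hinj (by simp only [Set.mem_Icc]; omega) (by simp only [Set.mem_Icc]; omega) hab
    rw [Finset.card_union_of_disjoint hTN] at hmain
    omega
lemma good_exists_perm {n : ℕ} {S : Finset ℕ} (hg : Good n S) :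
    ∃ σ : ℕ → ℕ, IsPermOn n σ ∧ CP n σ = S := by
  classical
  obtain ⟨hsub, hcond⟩ := hg
  set k := S.card with hk
  set C := Finset.Icc 1 n \ S with hC
  have hCsub : C ⊆ Finset.Icc 1 n := Finset.sdiff_subset
  have hkn : k ≤ n := by
    have := Finset.card_le_card hsub
    rw [Nat.card_Icc] at this
    omega
  have hCcard : C.card = n - k := by
    rw [hC, Finset.card_sdiff_of_subset hsub, Nat.card_Icc]
    omega
  have hSmem : ∀ x ∈ S, 1 ≤ x ∧ x ≤ n := by
    intro x hx
    have := hsub hx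
    rw [Finset.mem_Icc] at this
    exact this
  have hCSdisj : ∀ x, x ∈ C → x ∉ S := fun x hx => (Finset.mem_sdiff.1 hx).2
  have h2k : 1 ≤ k → 2 * k + 1 ≤ n := by
    intro hk1
    have hne : S.Nonempty := Finset.card_pos.1 (by omega)
    have hMS : S.max' hne ∈ S := S.max'_mem hne
    have hfil : S.filter (· ≤ S.max' hne) = S :=
      Finset.filter_true_of_mem (fun x hx => S.le_max' x hx)
    have h1 := hcond _ hMS
    rw [hfil] at h1
    have h2 := (hSmem _ hMS).2
    omega
  set p : ℕ → ℕ := fun j => (S.sort (·≤·)).getD j 0 with hpdef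
  set q : ℕ → ℕ := fun j => (C.sort (·≤·)).getD j 0 with hqdef
  have hp_mem : ∀ j, j < k → p j ∈ S := by
    intro j hj; exact sort_getD_mem (by omega)
  have hq_mem : ∀ j, j < n - k → q j ∈ C := by
    intro j hj; exact sort_getD_mem (by omega)
  have hp_inj : ∀ i j, i < k → j < k → p i = p j → i = j := by
    intro i j hi hj h; exact getD_inj (by omega) (by omega) h
  have hq_inj : ∀ i j, i < n - k → j < n - k → q i = q j → i = j := by
    intro i j hi hj h; exact getD_inj (by omega) (by omega) h
  have hq_lt : ∀ i j, i < j → j < n - k → q i < q j := by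
    intro i j hij hj; exact sort_getD_lt hij (by omega)
  have hpq : ∀ j, j < k → q (j+1) < p j := by
    intro j hj
    have hpS : p j ∈ S := hp_mem j hj
    have h2kn : 2 * k + 1 ≤ n := h2k (by omega)
    have hj1 : j + 1 < n - k := by omega
    have hfS_le : (S.filter (· < p j)).card ≤ j :=
      count_le_of_le_getD (by omega) le_rfl
    have hge : j + 1 ≤ (S.filter (· < p j + 1)).card :=
      lt_count_of_getD_lt (by omega) (Nat.lt_succ_self _)
    have hfeq : S.filter (· < p j + 1) = S.filter (· ≤ p j) :=
      Finset.filter_congr (fun x _ => by omega)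
    have hple := hcond (p j) hpS
    rw [hfeq] at hge
    have hp_big : 2 * (j+1) < p j := by omega
    have hsplit : Finset.Icc 1 (p j - 1) ⊆ S.filter (· < p j) ∪ C.filter (· < p j) := by
      intro x hx
      rw [Finset.mem_Icc] at hx
      have hpn := (hSmem _ hpS).2
      have hxn : x ∈ Finset.Icc 1 n := by
        rw [Finset.mem_Icc]; omega
      by_cases hxS : x ∈ S
      · exact Finset.mem_union_left _ (Finset.mem_filter.2 ⟨hxS, by omega⟩)
      · exact Finset.mem_union_right _
          (Finset.mem_filter.2 ⟨Finset.mem_sdiff.2 ⟨hxn, hxS⟩, by omega⟩)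
    have hcount : p j - 1 ≤ (S.filter (· < p j)).card + (C.filter (· < p j)).card := by
      calc p j - 1 = (Finset.Icc 1 (p j - 1)).card := by rw [Nat.card_Icc]; omega
        _ ≤ (S.filter (· < p j) ∪ C.filter (· < p j)).card := Finset.card_le_card hsplit
        _ ≤ _ := Finset.card_union_le _ _
    by_contra hcon
    push_neg at hcon
    have := count_le_of_le_getD (A := C) (i := j+1) (by omega) hcon
    omega
  have hqp : ∀ j, j < k → q j < p j := by
    intro j hj
    have h2kn : 2 * k + 1 ≤ n := h2k (by omega)
    exact lt_trans (hq_lt j (j+1) (by omega) (by omega)) (hpq j hj)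
  set σ : ℕ → ℕ := fun i =>
    if i ≤ 2*k then (if i % 2 = 0 then p (i/2 - 1) else q (i/2)) else q (i - (k+1)) with hσdef
  have hσ_even : ∀ i, i % 2 = 0 → i ≤ 2*k → σ i = p (i/2 - 1) := by
    intro i h1 h2; simp only [hσdef]; rw [if_pos h2, if_pos h1]
  have hσ_odd : ∀ i, i % 2 = 1 → i ≤ 2*k → σ i = q (i/2) := by
    intro i h1 h2; simp only [hσdef]; rw [if_pos h2, if_neg (by omega)]
  have hσ_hi : ∀ i, 2*k < i → σ i = q (i - (k+1)) := by
    intro i h1; simp only [hσdef]; rw [if_neg (by omega)]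
  have hup : ∀ i, 1 ≤ i → i < n → ¬(i % 2 = 0 ∧ i ≤ 2*k) → σ i < σ (i+1) := by
    intro i h1 h2 h3
    by_cases hle : i ≤ 2*k
    · have hodd : i % 2 = 1 := by
        by_contra hcon
        exact h3 ⟨by omega, hle⟩
      rw [hσ_odd i hodd hle, hσ_even (i+1) (by omega) (by omega)]
      have heq : (i+1)/2 - 1 = i/2 := by omega
      rw [heq]
      exact hqp (i/2) (by omega)
    · push_neg at hle
      rw [hσ_hi i hle, hσ_hi (i+1) (by omega)]
      have heq : i + 1 - (k+1) = (i - (k+1)) + 1 := by omega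
      rw [heq]
      exact hq_lt _ _ (by omega) (by omega)
  have hno_peak : ∀ i, 2 ≤ i → i ≤ n - 1 →
      (σ (i-1) < σ i ∧ σ (i+1) < σ i) → (i % 2 = 0 ∧ i ≤ 2*k) := by
    intro i h2 h1 hpk
    by_contra hcon
    have := hup i (by omega) (by omega) hcon
    omega
  have hpeak : ∀ i, i % 2 = 0 → 2 ≤ i → i ≤ 2*k → σ (i-1) < σ i ∧ σ (i+1) < σ i := by
    intro i he h2 hle
    have hj : i/2 - 1 < k := by omega
    have h2kn := h2k (by omega)
    have hevi : σ i = p (i/2 - 1) := hσ_even i he hle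
    have hl : σ (i-1) = q (i/2 - 1) := by
      rw [hσ_odd (i-1) (by omega) (by omega)]
      congr 1
      omega
    have hr : σ (i+1) = q (i/2) := by
      by_cases hc : i + 1 ≤ 2*k
      · rw [hσ_odd (i+1) (by omega) hc]
        congr 1
        omega
      · rw [hσ_hi (i+1) (by omega)]
        congr 1
        omega
    constructor
    · rw [hl, hevi]; exact hqp _ hj
    · rw [hr, hevi]
      have heq : i/2 = (i/2 - 1) + 1 := by omega
      rw [heq]
      exact hpq _ hj
  have hCP : CP n σ = S := by
    ext x
    simp only [CP, Finset.mem_image, Finset.mem_filter, Finset.mem_Icc]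
    constructor
    · rintro ⟨i, ⟨⟨hi2, hi1⟩, hpk⟩, rfl⟩
      obtain ⟨he, hle⟩ := hno_peak i hi2 hi1 hpk
      rw [hσ_even i he hle]
      exact hp_mem _ (by omega)
    · intro hx
      have hxl : x ∈ S.sort (·≤·) := (Finset.mem_sort (α := ℕ) (·≤·)).2 hx
      obtain ⟨j, hjl, hjx⟩ := List.mem_iff_getElem.1 hxl
      rw [Finset.length_sort] at hjl
      have hjk : j < k := by omega
      have hpj : p j = x := by
        simp only [hpdef]
        rw [List.getD_eq_getElem _ 0 (by rwa [Finset.length_sort])]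
        exact hjx
      have h2kn := h2k (by omega)
      refine ⟨2*j+2, ⟨⟨by omega, by omega⟩, hpeak (2*j+2) (by omega) (by omega) (by omega)⟩, ?_⟩
      rw [hσ_even (2*j+2) (by omega) (by omega)]
      have heq : (2*j+2)/2 - 1 = j := by omega
      rw [heq, hpj]
  have hmapsTo : Set.MapsTo σ (Set.Icc 1 n) (Set.Icc 1 n) := by
    intro i hi
    rw [Set.mem_Icc] at hi
    rw [Set.mem_Icc]
    by_cases hle : i ≤ 2*k
    · by_cases he : i % 2 = 0
      · rw [hσ_even i he hle]
        have := hSmem _ (hp_mem (i/2 - 1) (by omega))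
        omega
      · rw [hσ_odd i (by omega) hle]
        have h2kn := h2k (by omega)
        have hq := hq_mem (i/2) (by omega)
        have := Finset.mem_Icc.1 (hCsub hq)
        omega
    · rw [hσ_hi i (by omega)]
      have hq := hq_mem (i - (k+1)) (by omega)
      have := Finset.mem_Icc.1 (hCsub hq)
      omega
  have hinjOn : Set.InjOn σ (Set.Icc 1 n) := by
    intro a ha b hb hab
    rw [Set.mem_Icc] at ha hb
    have h2kn := h2k
    by_cases hea : a % 2 = 0 ∧ a ≤ 2*k <;> by_cases heb : b % 2 = 0 ∧ b ≤ 2*k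
    · obtain ⟨ha1, ha2⟩ := hea; obtain ⟨hb1, hb2⟩ := heb
      rw [hσ_even a ha1 ha2, hσ_even b hb1 hb2] at hab
      have := hp_inj _ _ (by omega) (by omega) hab
      omega
    · obtain ⟨ha1, ha2⟩ := hea
      exfalso
      rw [hσ_even a ha1 ha2] at hab
      have hpS := hp_mem (a/2 - 1) (by omega)
      by_cases hlb : b ≤ 2*k
      · have hob : b % 2 = 1 := by omega
        rw [hσ_odd b hob hlb] at hab
        have hqC := hq_mem (b/2) (by have := h2k (by omega); omega)
        exact hCSdisj _ hqC (hab ▸ hpS)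
      · rw [hσ_hi b (by omega)] at hab
        have hqC := hq_mem (b - (k+1)) (by omega)
        exact hCSdisj _ hqC (hab ▸ hpS)
    · obtain ⟨hb1, hb2⟩ := heb
      exfalso
      rw [hσ_even b hb1 hb2] at hab
      have hpS := hp_mem (b/2 - 1) (by omega)
      by_cases hla : a ≤ 2*k
      · have hoa : a % 2 = 1 := by omega
        rw [hσ_odd a hoa hla] at hab
        have hqC := hq_mem (a/2) (by have := h2k (by omega); omega)
        exact hCSdisj _ hqC (hab.symm ▸ hpS)
      · rw [hσ_hi a (by omega)] at hab
        have hqC := hq_mem (a - (k+1)) (by omega)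
        exact hCSdisj _ hqC (hab.symm ▸ hpS)
    · by_cases hla : a ≤ 2*k <;> by_cases hlb : b ≤ 2*k
      · have hoa : a % 2 = 1 := by omega
        have hob : b % 2 = 1 := by omega
        rw [hσ_odd a hoa hla, hσ_odd b hob hlb] at hab
        have := hq_inj _ _ (by have := h2k (by omega); omega)
          (by have := h2k (by omega); omega) hab
        omega
      · have hoa : a % 2 = 1 := by omega
        rw [hσ_odd a hoa hla, hσ_hi b (by omega)] at hab
        have := hq_inj _ _ (by have := h2k (by omega); omega) (by omega) hab
        omega
      · have hob : b % 2 = 1 := by omega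
        rw [hσ_hi a (by omega), hσ_odd b hob hlb] at hab
        have := hq_inj _ _ (by omega) (by have := h2k (by omega); omega) hab
        omega
      · rw [hσ_hi a (by omega), hσ_hi b (by omega)] at hab
        have := hq_inj _ _ (by omega) (by omega) hab
        omega
  have hsurjOn : Set.SurjOn σ (Set.Icc 1 n) (Set.Icc 1 n) := by
    intro y hy
    rw [Set.mem_Icc] at hy
    by_cases hyS : y ∈ S
    · obtain ⟨j, hjl, hjx⟩ :=
        List.mem_iff_getElem.1 ((Finset.mem_sort (α := ℕ) (·≤·)).2 hyS)
      rw [Finset.length_sort] at hjl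
      have hjk : j < k := by omega
      have hpj : p j = y := by
        simp only [hpdef]
        rw [List.getD_eq_getElem _ 0 (by rwa [Finset.length_sort])]
        exact hjx
      have h2kn := h2k (by omega)
      refine ⟨2*j+2, ?_, ?_⟩
      · rw [Set.mem_Icc]; omega
      · rw [hσ_even _ (by omega) (by omega)]
        have heq : (2*j+2)/2 - 1 = j := by omega
        rw [heq, hpj]
    · have hyC : y ∈ C := Finset.mem_sdiff.2 ⟨Finset.mem_Icc.2 hy, hyS⟩
      obtain ⟨j, hjl, hjx⟩ :=
        List.mem_iff_getElem.1 ((Finset.mem_sort (α := ℕ) (·≤·)).2 hyC)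
      rw [Finset.length_sort] at hjl
      have hjk : j < n - k := by omega
      have hqj : q j = y := by
        simp only [hqdef]
        rw [List.getD_eq_getElem _ 0 (by rwa [Finset.length_sort])]
        exact hjx
      by_cases hjlt : j < k
      · have h2kn := h2k (by omega)
        refine ⟨2*j+1, ?_, ?_⟩
        · rw [Set.mem_Icc]; omega
        · rw [hσ_odd _ (by omega) (by omega)]
          have heq : (2*j+1)/2 = j := by omega
          rw [heq, hqj]
      · refine ⟨j + k + 1, ?_, ?_⟩
        · rw [Set.mem_Icc]; omega
        · rw [hσ_hi _ (by omega)]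
          have heq : j + k + 1 - (k+1) = j := by omega
          rw [heq, hqj]
  exact ⟨σ, ⟨hmapsTo, hinjOn, hsurjOn⟩, hCP⟩
open scoped Classical in
lemma mem_Pn_iff {n : ℕ} {S : Finset ℕ} : S ∈ Pn n ↔ Good n S := by
  rw [Pn, Finset.mem_filter, Finset.mem_powerset]
  constructor
  · rintro ⟨hsub, σ, hσ, rfl⟩
    exact good_CP hσ
  · intro hg
    exact ⟨hg.1, good_exists_perm hg⟩

lemma good_card_bound {n : ℕ} {S : Finset ℕ} (hg : Good n S) (hne : S.Nonempty) :
    2 * S.card + 1 ≤ n := by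
  obtain ⟨hsub, hcond⟩ := hg
  have hMS : S.max' hne ∈ S := S.max'_mem hne
  have hfil : S.filter (· ≤ S.max' hne) = S :=
    Finset.filter_true_of_mem (fun x hx => S.le_max' x hx)
  have h1 := hcond _ hMS
  rw [hfil] at h1
  have h2 := (Finset.mem_Icc.1 (hsub hMS)).2
  omega

lemma good_erase {n : ℕ} {S : Finset ℕ} (hg : Good (n+1) S) :
    Good n (S.erase (n+1)) := by
  obtain ⟨hsub, hcond⟩ := hg
  constructor
  · intro x hx
    rw [Finset.mem_erase] at hx
    have := Finset.mem_Icc.1 (hsub hx.2)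
    rw [Finset.mem_Icc]
    omega
  · intro s hs
    rw [Finset.mem_erase] at hs
    have h1 := hcond s hs.2
    have h2 : (S.erase (n+1)).filter (· ≤ s) ⊆ S.filter (· ≤ s) :=
      Finset.filter_subset_filter _ (Finset.erase_subset _ _)
    have := Finset.card_le_card h2
    omega

lemma good_insert {n : ℕ} {S : Finset ℕ} (hg : Good n S) (hcard : 2 * S.card + 2 < n + 1) :
    Good (n+1) (insert (n+1) S) := by
  classical
  obtain ⟨hsub, hcond⟩ := hg
  have hnotmem : (n+1) ∉ S := fun h => by
    have := (Finset.mem_Icc.1 (hsub h)).2; omega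
  constructor
  · intro x hx
    rw [Finset.mem_insert] at hx
    rcases hx with rfl | hx
    · rw [Finset.mem_Icc]; omega
    · have := Finset.mem_Icc.1 (hsub hx)
      rw [Finset.mem_Icc]; omega
  · intro s hs
    rw [Finset.mem_insert] at hs
    rcases hs with rfl | hs
    · have hfil : (insert (n+1) S).filter (· ≤ (n+1)) = insert (n+1) S := by
        apply Finset.filter_true_of_mem
        intro x hx
        rw [Finset.mem_insert] at hx
        rcases hx with rfl | hx
        · exact le_rfl
        · have := (Finset.mem_Icc.1 (hsub hx)).2; omega
      rw [hfil, Finset.card_insert_of_notMem hnotmem]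
      omega
    · have hns : ¬ (n+1 ≤ s) := by
        have := (Finset.mem_Icc.1 (hsub hs)).2; omega
      rw [Finset.filter_insert, if_neg hns]
      exact hcond s hs


/-- Theorem 3.3 (odd case): for odd `n`, `P_{n+1}` is isomorphic to
`(2 × P_n) \ ({1} × P_{n,⌊(n−1)/2⌋−1})`, via `S ↦ (1, S \ {n+1})` if `n+1 ∈ S`
and `S ↦ (0, S)` otherwise. -/
theorem Pn_succ_orderIso_odd (n : ℕ) (hn : 3 ≤ n) (hodd : Odd n) :
    ∃ e : {S : Finset ℕ // S ∈ Pn (n + 1)} ≃o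
        {p : Fin 2 × {S : Finset ℕ // S ∈ Pn n} //
          ¬ (p.1 = 1 ∧ p.2.val.card = (n - 1) / 2)},
      ∀ S : {S : Finset ℕ // S ∈ Pn (n + 1)},
        ((e S).val.1 = 1 ↔ (n + 1) ∈ S.val) ∧
        ((e S).val.2 : Finset ℕ) = S.val.erase (n + 1) := by
  classical
  obtain ⟨t, ht⟩ := hodd
  have hbound : ∀ S : Finset ℕ, S ∈ Pn (n+1) → S.card ≤ (n-1)/2 := by
    intro S hS
    rcases Finset.eq_empty_or_nonempty S with rfl | hne
    · simp
    · have := good_card_bound (mem_Pn_iff.1 hS) hne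
      omega
  have hboundn : ∀ S : Finset ℕ, S ∈ Pn n → S.card ≤ (n-1)/2 := by
    intro S hS
    rcases Finset.eq_empty_or_nonempty S with rfl | hne
    · simp
    · have := good_card_bound (mem_Pn_iff.1 hS) hne
      omega
  have hF2 : ∀ S : Finset ℕ, S ∈ Pn (n+1) → S.erase (n+1) ∈ Pn n := by
    intro S hS
    exact mem_Pn_iff.2 (good_erase (mem_Pn_iff.1 hS))
  have hG1 : ∀ S : Finset ℕ, S ∈ Pn n → S ∈ Pn (n+1) := by
    intro S hS
    obtain ⟨h1, h2⟩ := mem_Pn_iff.1 hS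
    exact mem_Pn_iff.2 ⟨h1.trans (Finset.Icc_subset_Icc_right (by omega)), h2⟩
  have hG2 : ∀ S : Finset ℕ, S ∈ Pn n → S.card ≠ (n-1)/2 → insert (n+1) S ∈ Pn (n+1) := by
    intro S hS hc
    have hb := hboundn S hS
    exact mem_Pn_iff.2 (good_insert (mem_Pn_iff.1 hS) (by omega))
  have hmemIcc : ∀ S : Finset ℕ, S ∈ Pn n → (n+1) ∉ S := by
    intro S hS h
    have := (mem_Pn_iff.1 hS).1 h
    rw [Finset.mem_Icc] at this
    omega
  have hFcond : ∀ S : Finset ℕ, S ∈ Pn (n+1) →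
      ¬ (((if (n+1) ∈ S then 1 else 0 : Fin 2)) = 1 ∧ (S.erase (n+1)).card = (n-1)/2) := by
    intro S hS hcon
    obtain ⟨h1, h2⟩ := hcon
    by_cases hmem : (n+1) ∈ S
    · have hb := hbound S hS
      have hcard : (S.erase (n+1)).card = S.card - 1 := Finset.card_erase_of_mem hmem
      have hpos : 1 ≤ S.card := Finset.card_pos.2 ⟨_, hmem⟩
      omega
    · rw [if_neg hmem] at h1
      exact absurd h1 (by decide)
  refine ⟨⟨⟨fun S => ⟨((if (n+1) ∈ S.val then 1 else 0 : Fin 2),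
        ⟨S.val.erase (n+1), hF2 S.val S.property⟩), hFcond S.val S.property⟩,
      fun p => ⟨if p.val.1 = 1 then insert (n+1) p.val.2.val else p.val.2.val, ?_⟩,
      ?_, ?_⟩, ?_⟩, ?_⟩
  · by_cases h1 : p.val.1 = 1
    · rw [if_pos h1]
      refine hG2 _ p.val.2.property ?_
      intro hc
      exact p.property ⟨h1, hc⟩
    · rw [if_neg h1]
      exact hG1 _ p.val.2.property
  · intro S
    apply Subtype.ext
    dsimp only
    by_cases hmem : (n+1) ∈ S.val
    · simp [hmem, Finset.insert_erase hmem]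
    · simp [hmem, Finset.erase_eq_of_notMem hmem]
  · intro p
    apply Subtype.ext
    refine Prod.ext ?_ ?_ <;> dsimp only <;> by_cases h1 : p.val.1 = 1
    · simp [h1]
    · have h0 : p.val.1 = 0 := by
        have := p.val.1.isLt
        apply Fin.ext
        have hne : (p.val.1 : ℕ) ≠ 1 := fun hc => h1 (Fin.ext hc)
        simp only [Fin.val_zero]
        omega
      simp [h1, hmemIcc _ p.val.2.property, h0]
    · apply Subtype.ext
      dsimp only
      rw [if_pos h1]
      exact Finset.erase_insert (hmemIcc _ p.val.2.property)
    · apply Subtype.ext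
      dsimp only
      rw [if_neg h1]
      exact Finset.erase_eq_of_notMem (hmemIcc _ p.val.2.property)
  · intro a b
    simp only [Equiv.coe_fn_mk]
    rw [Subtype.mk_le_mk, Prod.mk_le_mk, Subtype.mk_le_mk]
    constructor
    · rintro ⟨h1, h2⟩
      rw [Finset.le_iff_subset] at h2
      show a.val ≤ b.val
      rw [Finset.le_iff_subset]
      intro x hx
      by_cases hxe : x = n+1
      · subst hxe
        rw [if_pos hx] at h1
        by_cases hb : (n+1) ∈ b.val
        · exact hb
        · rw [if_neg hb] at h1
          exact absurd h1 (by decide)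
      · have hxa : x ∈ a.val.erase (n+1) := Finset.mem_erase.2 ⟨hxe, hx⟩
        exact Finset.mem_of_mem_erase (h2 hxa)
    · intro h
      have hsub : a.val ⊆ b.val := h
      constructor
      · by_cases ha : (n+1) ∈ a.val
        · rw [if_pos ha, if_pos (hsub ha)]
        · rw [if_neg ha]
          exact Fin.zero_le _
      · rw [Finset.le_iff_subset]
        exact Finset.erase_subset_erase _ hsub
  · intro S
    refine ⟨?_, rfl⟩
    show (if (n+1) ∈ S.val then (1:Fin 2) else 0) = 1 ↔ (n + 1) ∈ S.val
    by_cases hmem : (n+1) ∈ S.val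
    · simp [hmem]
    · simp [hmem]
end
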